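/- arXiv:2111.03732 — 5 statements merged into one kernel-verified Lean document; each statement's English description precedes it below -/
import Mathlib

section
/- Let 0 ≤ α < n. For every f ∈ L¹_loc(ℝⁿ) and every x ∈ ℝⁿ, the pointwise estimate M_α f(x) ≤ (n/(n-α)) · sup_{t>0} t^{α/n} f*(t) holds. -/
open MeasureTheory ENNReal Set Metric

/-- Non-increasing rearrangement of an `ℝ≥0∞`-valued function on `ℝⁿ`:
`g*(t) = inf {l | volume {x | g x > l} ≤ t}`. -/
noncomputable def rearr (n : ℕ) (g : EuclideanSpace ℝ (Fin n) → ℝ≥0∞) (t : ℝ) : ℝ≥0∞ :=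
  sInf {l : ℝ≥0∞ | volume {x | l < g x} ≤ ENNReal.ofReal t}

/-- The fractional maximal operator
`M_α f (x) = sup_{r>0} |B(x,r)|^(α/n - 1) ∫_{B(x,r)} |f|`. -/
noncomputable def fracMax (n : ℕ) (α : ℝ) (f : EuclideanSpace ℝ (Fin n) → ℝ)
    (x : EuclideanSpace ℝ (Fin n)) : ℝ≥0∞ :=
  ⨆ r : {r : ℝ // 0 < r},
    volume (ball x r.1) ^ (α / n - 1 : ℝ) * ∫⁻ y in ball x r.1, ENNReal.ofReal |f y|

/-- `f**(t) = (1/t) ∫₀^t f*(s) ds` for a real-valued `f` on `ℝⁿ`. -/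
noncomputable def dstar (n : ℕ) (f : EuclideanSpace ℝ (Fin n) → ℝ) (t : ℝ) : ℝ≥0∞ :=
  ENNReal.ofReal (1 / t) *
    ∫⁻ s in Set.Ioc (0 : ℝ) t, rearr n (fun y => ENNReal.ofReal |f y|) s

/-- Lorentz norm `‖g‖_{L_{p,q}} = (∫₀^∞ (t^{1/p} g*(t))^q dt/t)^{1/q}`, with the usual
supremum modification when `q = ∞`. -/
noncomputable def lorentzNorm (n : ℕ) (p : ℝ) (q : ℝ≥0∞)
    (g : EuclideanSpace ℝ (Fin n) → ℝ≥0∞) : ℝ≥0∞ :=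
  if q = ⊤ then
    ⨆ t : {t : ℝ // 0 < t}, ENNReal.ofReal (t.1 ^ (1 / p)) * rearr n g t.1
  else
    (∫⁻ t in Set.Ioi (0 : ℝ),
        (ENNReal.ofReal (t ^ (1 / p)) * rearr n g t) ^ q.toReal * ENNReal.ofReal (1 / t)) ^
      (1 / q.toReal)

/-- Lorentz–Morrey norm
`‖g‖_{𝓛_{p,q;λ}} = sup_{x, r>0} r^{-λ/p} ‖g χ_{B(x,r)}‖_{L_{p,q}}`. -/
noncomputable def lorentzMorrey (n : ℕ) (p : ℝ) (q : ℝ≥0∞) (lam : ℝ)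
    (g : EuclideanSpace ℝ (Fin n) → ℝ≥0∞) : ℝ≥0∞ :=
  ⨆ (x : EuclideanSpace ℝ (Fin n)) (r : {r : ℝ // 0 < r}),
    ENNReal.ofReal (r.1 ^ (-(lam / p))) * lorentzNorm n p q ((ball x r.1).indicator g)

lemma rearr_ge {n : ℕ} {g : EuclideanSpace ℝ (Fin n) → ℝ≥0∞} {s : ℝ} {l : ℝ≥0∞}
    (h : ENNReal.ofReal s < volume {y | l < g y}) : l ≤ rearr n g s := by
  simp only [rearr]
  refine le_sInf fun l' hl' => ?_
  by_contra hlt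
  push_neg at hlt
  have hmono : volume {y | l < g y} ≤ volume {y | l' < g y} :=
    measure_mono fun y hy => lt_trans hlt hy
  exact absurd (hmono.trans hl') (not_le.2 h)

lemma dist_bound {n : ℕ} {α : ℝ} (hα : 0 < α) (hαn : α < n)
    {g : EuclideanSpace ℝ (Fin n) → ℝ≥0∞} {S : ℝ≥0∞}
    (hS : ∀ s : ℝ, 0 < s → ENNReal.ofReal (s ^ (α / n)) * rearr n g s ≤ S)
    {t : ℝ} (ht : 0 < t) :
    volume {y | ENNReal.ofReal t < g y} ≤ (S / ENNReal.ofReal t) ^ ((n : ℝ) / α) := by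
  have hn : (0:ℝ) < n := hα.trans hαn
  set l := ENNReal.ofReal t with hl
  have hl0 : l ≠ 0 := by simp [hl, ht, ENNReal.ofReal_eq_zero, not_le]
  have hlT : l ≠ ⊤ := ENNReal.ofReal_ne_top
  by_contra hcon
  push_neg at hcon
  obtain ⟨c, hc1, hc2⟩ := exists_between hcon
  have hcT : c ≠ ⊤ := (hc2.trans_le le_top).ne
  have hc0 : 0 < c := zero_le.trans_lt hc1
  have hs0 : 0 < c.toReal := ENNReal.toReal_pos hc0.ne' hcT
  have hos : ENNReal.ofReal c.toReal = c := ENNReal.ofReal_toReal hcT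
  have h1 : l ≤ rearr n g c.toReal := rearr_ge (by rw [hos]; exact hc2)
  have h2 : c ^ (α / (n:ℝ)) * l ≤ S := by
    calc c ^ (α / (n:ℝ)) * l
        = ENNReal.ofReal (c.toReal ^ (α / (n:ℝ))) * l := by
          rw [← ENNReal.ofReal_rpow_of_pos hs0, hos]
      _ ≤ ENNReal.ofReal (c.toReal ^ (α / (n:ℝ))) * rearr n g c.toReal := by gcongr
      _ ≤ S := hS _ hs0
  have h3 : S / l < c ^ (α / (n:ℝ)) := by
    have h := ENNReal.rpow_lt_rpow hc1 (div_pos hα hn)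
    have hexp : ((n:ℝ) / α) * (α / (n:ℝ)) = 1 := by field_simp
    rwa [← ENNReal.rpow_mul, hexp, ENNReal.rpow_one] at h
  have h4 : S < c ^ (α / (n:ℝ)) * l := by
    have h := (ENNReal.mul_lt_mul_right hl0 hlT) h3
    rw [mul_comm l (S / l), mul_comm l (c ^ _)] at h
    rwa [ENNReal.div_mul_cancel hl0 hlT] at h
  exact absurd h2 (not_le.2 h4)

lemma meas_zero_of_gt {n : ℕ} {g : EuclideanSpace ℝ (Fin n) → ℝ≥0∞} {S : ℝ≥0∞}
    (hS : ∀ s : ℝ, 0 < s → rearr n g s ≤ S) {t : ℝ} (ht : S < ENNReal.ofReal t) :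
    volume {y | ENNReal.ofReal t < g y} = 0 := by
  by_contra h
  have hpos : 0 < volume {y | ENNReal.ofReal t < g y} := pos_iff_ne_zero.2 h
  obtain ⟨c, hc0, hc2⟩ := exists_between hpos
  have hcT : c ≠ ⊤ := (hc2.trans_le le_top).ne
  have hs0 : 0 < c.toReal := ENNReal.toReal_pos hc0.ne' hcT
  have h1 : ENNReal.ofReal t ≤ rearr n g c.toReal :=
    rearr_ge (by rw [ENNReal.ofReal_toReal hcT]; exact hc2)
  exact absurd (h1.trans (hS _ hs0)) (not_le.2 ht)

lemma tail_integral {q lam : ℝ} (hq : 1 < q) (hlam : 0 < lam) (S : ℝ≥0∞) (hS : S ≠ ⊤) :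
    (∫⁻ t in Ioi lam, (S / ENNReal.ofReal t) ^ q) =
      S ^ q * ENNReal.ofReal (lam ^ (1 - q) / (q - 1)) := by
  have hq0 : (0:ℝ) ≤ q := by linarith
  have h1 : (∫⁻ t in Ioi lam, (S / ENNReal.ofReal t) ^ q)
      = ∫⁻ t in Ioi lam, S ^ q * ENNReal.ofReal (t ^ (-q)) := by
    refine setLIntegral_congr_fun measurableSet_Ioi (fun t ht => ?_)
    have ht0 : 0 < t := hlam.trans ht
    rw [ENNReal.div_rpow_of_nonneg _ _ hq0, div_eq_mul_inv, ← ENNReal.rpow_neg,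
      ENNReal.ofReal_rpow_of_pos ht0]
  rw [h1, lintegral_const_mul' _ _ (ENNReal.rpow_ne_top_of_nonneg hq0 hS)]
  congr 1
  have hq1 : (-q : ℝ) < -1 := by linarith
  have hnn : 0 ≤ᵐ[volume.restrict (Ioi lam)] fun t : ℝ => t ^ (-q) := by
    filter_upwards [ae_restrict_mem measurableSet_Ioi] with t ht
    exact Real.rpow_nonneg (hlam.trans ht).le _
  rw [← MeasureTheory.ofReal_integral_eq_lintegral_ofReal
      (integrableOn_Ioi_rpow_of_lt hq1 hlam) hnn]
  rw [integral_Ioi_rpow_of_lt hq1 hlam]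
  congr 1
  rw [show (-q + 1 : ℝ) = -(q - 1) by ring, show (1 - q : ℝ) = -(q - 1) by ring,
    neg_div_neg_eq]


/-- for `0 ≤ α < n`, every `f ∈ L¹_loc(ℝⁿ)` and every `x`,
`M_α f (x) ≤ (n/(n-α)) · sup_{t>0} t^{α/n} f*(t)`. -/
theorem stmt_1 (n : ℕ) (α : ℝ) (hα0 : 0 ≤ α) (hαn : α < n)
    (f : EuclideanSpace ℝ (Fin n) → ℝ) (hf : LocallyIntegrable f volume)
    (x : EuclideanSpace ℝ (Fin n)) :
    fracMax n α f x ≤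
      ENNReal.ofReal ((n : ℝ) / (n - α)) *
        ⨆ t : {t : ℝ // 0 < t},
          ENNReal.ofReal (t.1 ^ (α / n)) * rearr n (fun y => ENNReal.ofReal |f y|) t.1 := by
  have hn : (0:ℝ) < n := lt_of_le_of_lt hα0 hαn
  set S := ⨆ t : {t : ℝ // 0 < t},
      ENNReal.ofReal (t.1 ^ (α / n)) * rearr n (fun y => ENNReal.ofReal |f y|) t.1 with hSdef
  have hS_ge : ∀ s : ℝ, 0 < s →
      ENNReal.ofReal (s ^ (α / n)) * rearr n (fun y => ENNReal.ofReal |f y|) s ≤ S := by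
    intro s hs
    rw [hSdef]
    exact le_iSup (fun t : {t : ℝ // 0 < t} =>
      ENNReal.ofReal (t.1 ^ (α / n)) * rearr n (fun y => ENNReal.ofReal |f y|) t.1) ⟨s, hs⟩
  unfold fracMax
  refine iSup_le ?_
  rintro ⟨r, hr⟩
  simp only
  by_cases hStop : S = ⊤
  · rw [hStop, ENNReal.mul_top (by simp [ENNReal.ofReal_eq_zero, not_le,
      div_pos hn (by linarith : (0:ℝ) < n - α)])]
    exact le_top
  set V := volume (ball x r) with hVdef
  have hV0 : V ≠ 0 := (measure_ball_pos volume x hr).ne'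
  have hVT : V ≠ ⊤ := measure_ball_lt_top.ne
  have hmf : AEMeasurable (fun y => |f y|) (volume.restrict (ball x r)) :=
    by simpa [Real.norm_eq_abs] using (hf.aestronglyMeasurable.norm.aemeasurable).restrict
  have hlc : (∫⁻ y in ball x r, ENNReal.ofReal |f y|) =
      ∫⁻ t in Ioi (0:ℝ), volume.restrict (ball x r) {a | t < |f a|} :=
    lintegral_eq_lintegral_meas_lt _ (ae_of_all _ fun y => abs_nonneg (f y)) hmf
  have hresV : ∀ t : ℝ, volume.restrict (ball x r) {a | t < |f a|} ≤ V :=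
    fun t => (measure_mono (subset_univ _)).trans_eq (Measure.restrict_apply_univ _)
  have hresD : ∀ t : ℝ, 0 < t → volume.restrict (ball x r) {a | t < |f a|}
      ≤ volume {y | ENNReal.ofReal t < ENNReal.ofReal |f y|} := by
    intro t ht
    refine le_trans (Measure.le_iff'.1 (Measure.restrict_le_self) _) (le_of_eq ?_)
    congr 1
    ext y
    simp only [mem_setOf_eq]
    exact (ENNReal.ofReal_lt_ofReal_iff_of_nonneg ht.le).symm
  rcases eq_or_lt_of_le hα0 with hαz | hαpos
  · -- case α = 0
    subst hαz
    have hS' : ∀ s : ℝ, 0 < s → rearr n (fun y => ENNReal.ofReal |f y|) s ≤ S := by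
      intro s hs
      have h := hS_ge s hs
      simpa [Real.rpow_zero] using h
    have hbound : (∫⁻ y in ball x r, ENNReal.ofReal |f y|) ≤ V * S := by
      rw [hlc, ← Ioc_union_Ioi_eq_Ioi (ENNReal.toReal_nonneg : (0:ℝ) ≤ S.toReal),
        lintegral_union measurableSet_Ioi Ioc_disjoint_Ioi_same]
      have p1 : (∫⁻ t in Ioc (0:ℝ) S.toReal,
          volume.restrict (ball x r) {a | t < |f a|}) ≤ V * S := by
        refine le_trans (setLIntegral_mono' measurableSet_Ioc fun t _ => hresV t) ?_
        rw [setLIntegral_const, Real.volume_Ioc, sub_zero, ENNReal.ofReal_toReal hStop]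
      have p2 : (∫⁻ t in Ioi S.toReal,
          volume.restrict (ball x r) {a | t < |f a|}) ≤ 0 := by
        refine le_trans (setLIntegral_mono' (g := fun _ => 0) measurableSet_Ioi
          fun t ht => ?_) (by simp)
        have ht0 : 0 < t := lt_of_le_of_lt ENNReal.toReal_nonneg ht
        have hz := meas_zero_of_gt hS' ((ENNReal.lt_ofReal_iff_toReal_lt hStop).2 ht)
        exact le_trans (hresD t ht0) (le_of_eq hz)
      calc (∫⁻ t in Ioc (0:ℝ) S.toReal, volume.restrict (ball x r) {a | t < |f a|})
            + ∫⁻ t in Ioi S.toReal, volume.restrict (ball x r) {a | t < |f a|}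
          ≤ V * S + 0 := add_le_add p1 p2
        _ = V * S := add_zero _
    calc V ^ ((0:ℝ) / (n:ℝ) - 1) * (∫⁻ y in ball x r, ENNReal.ofReal |f y|)
        ≤ V ^ ((0:ℝ) / (n:ℝ) - 1) * (V * S) := by gcongr
      _ = S := by
          rw [show (0:ℝ) / (n:ℝ) - 1 = -1 from by simp, ENNReal.rpow_neg_one, ← mul_assoc,
            ENNReal.inv_mul_cancel hV0 hVT, one_mul]
      _ ≤ ENNReal.ofReal ((n:ℝ) / ((n:ℝ) - 0)) * S := by
          rw [sub_zero, div_self hn.ne', ENNReal.ofReal_one, one_mul]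
  rcases eq_or_ne S 0 with hS0 | hS0
  · -- case S = 0
    have hI : (∫⁻ y in ball x r, ENNReal.ofReal |f y|) = 0 := by
      rw [hlc]
      refine le_antisymm (le_trans
        (setLIntegral_mono' (g := fun _ => 0) measurableSet_Ioi fun t ht => ?_)
        (by simp)) zero_le
      refine le_trans (hresD t ht) ?_
      have hd := dist_bound hαpos hαn hS_ge ht
      rwa [hS0, ENNReal.zero_div, ENNReal.zero_rpow_of_pos (div_pos hn hαpos)] at hd
    rw [hI, mul_zero]
    exact zero_le
  -- main case 0 < α, 0 < S < ⊤
  have hq : 1 < (n:ℝ) / α := (one_lt_div hαpos).2 hαn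
  set W := V ^ (-(α / (n:ℝ))) with hWdef
  have hWT : W ≠ ⊤ := by
    rw [hWdef, ENNReal.rpow_neg]
    exact ENNReal.inv_ne_top.2 (ENNReal.rpow_pos (pos_iff_ne_zero.2 hV0) hVT).ne'
  have hW0 : W ≠ 0 := by
    rw [hWdef, ENNReal.rpow_neg]
    exact ENNReal.inv_ne_zero.2 (ENNReal.rpow_ne_top_of_nonneg (div_nonneg hα0 hn.le) hVT)
  set lam := (S * W).toReal with hlamdef
  have hSW0 : S * W ≠ 0 := mul_ne_zero hS0 hW0
  have hSWT : S * W ≠ ⊤ := ENNReal.mul_ne_top hStop hWT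
  have hlam0 : 0 < lam := ENNReal.toReal_pos hSW0 hSWT
  have hofl : ENNReal.ofReal lam = S * W := ENNReal.ofReal_toReal hSWT
  have hbound : (∫⁻ y in ball x r, ENNReal.ofReal |f y|) ≤
      V * ENNReal.ofReal lam
        + S ^ ((n:ℝ) / α) * ENNReal.ofReal (lam ^ (1 - (n:ℝ) / α) / ((n:ℝ) / α - 1)) := by
    rw [hlc, ← Ioc_union_Ioi_eq_Ioi hlam0.le,
      lintegral_union measurableSet_Ioi Ioc_disjoint_Ioi_same]
    refine add_le_add ?_ ?_
    · refine le_trans (setLIntegral_mono' measurableSet_Ioc fun t _ => hresV t) ?_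
      rw [setLIntegral_const, Real.volume_Ioc, sub_zero]
    · refine le_trans (setLIntegral_mono' measurableSet_Ioi fun t ht => ?_)
        (le_of_eq (tail_integral hq hlam0 S hStop))
      exact le_trans (hresD t (hlam0.trans ht)) (dist_bound hαpos hαn hS_ge (hlam0.trans ht))
  have hVW : V * W = V ^ (1 - α / (n:ℝ)) := by
    nth_rewrite 1 [← ENNReal.rpow_one V]
    rw [hWdef, ← ENNReal.rpow_add _ _ hV0 hVT,
      show (1:ℝ) + -(α / (n:ℝ)) = 1 - α / (n:ℝ) from by ring]
  have hlamr : ENNReal.ofReal (lam ^ (1 - (n:ℝ) / α)) = (S * W) ^ (1 - (n:ℝ) / α) := by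
    rw [hlamdef, ENNReal.toReal_rpow, ENNReal.ofReal_toReal]
    rw [show (1 - (n:ℝ) / α) = -((n:ℝ) / α - 1) from by ring, ENNReal.rpow_neg]
    exact ENNReal.inv_ne_top.2 (ENNReal.rpow_pos (pos_iff_ne_zero.2 hSW0) hSWT).ne'
  have w1 : W ^ (1 - (n:ℝ) / α) = V ^ (1 - α / (n:ℝ)) := by
    rw [hWdef, ← ENNReal.rpow_mul]
    congr 1
    field_simp
    ring
  have s1 : S ^ ((n:ℝ) / α) * S ^ (1 - (n:ℝ) / α) = S := by
    rw [← ENNReal.rpow_add _ _ hS0 hStop,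
      show (n:ℝ) / α + (1 - (n:ℝ) / α) = 1 from by ring, ENNReal.rpow_one]
  have c1 : ((n:ℝ) / α - 1)⁻¹ = α / ((n:ℝ) - α) := by
    rw [show (n:ℝ) / α - 1 = ((n:ℝ) - α) / α from by field_simp, inv_div]
  have e1 : V * ENNReal.ofReal lam = S * V ^ (1 - α / (n:ℝ)) := by
    rw [hofl, ← mul_assoc, mul_comm V S, mul_assoc, hVW]
  have e2 : S ^ ((n:ℝ) / α) * ENNReal.ofReal (lam ^ (1 - (n:ℝ) / α) / ((n:ℝ) / α - 1))
      = S * V ^ (1 - α / (n:ℝ)) * ENNReal.ofReal (α / ((n:ℝ) - α)) := by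
    calc S ^ ((n:ℝ) / α) * ENNReal.ofReal (lam ^ (1 - (n:ℝ) / α) / ((n:ℝ) / α - 1))
        = S ^ ((n:ℝ) / α) * (ENNReal.ofReal (lam ^ (1 - (n:ℝ) / α))
            * ENNReal.ofReal (((n:ℝ) / α - 1)⁻¹)) := by
          rw [show lam ^ (1 - (n:ℝ) / α) / ((n:ℝ) / α - 1)
              = lam ^ (1 - (n:ℝ) / α) * ((n:ℝ) / α - 1)⁻¹ from div_eq_mul_inv _ _,
            ENNReal.ofReal_mul (Real.rpow_nonneg hlam0.le _)]
      _ = S ^ ((n:ℝ) / α) * S ^ (1 - (n:ℝ) / α) * W ^ (1 - (n:ℝ) / α)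
            * ENNReal.ofReal (((n:ℝ) / α - 1)⁻¹) := by
          rw [hlamr, ENNReal.mul_rpow_of_ne_top hStop hWT]; ring
      _ = S * V ^ (1 - α / (n:ℝ)) * ENNReal.ofReal (α / ((n:ℝ) - α)) := by rw [s1, w1, c1]
  have hRHS : V * ENNReal.ofReal lam
      + S ^ ((n:ℝ) / α) * ENNReal.ofReal (lam ^ (1 - (n:ℝ) / α) / ((n:ℝ) / α - 1))
      = ENNReal.ofReal ((n:ℝ) / ((n:ℝ) - α)) * S * V ^ (1 - α / (n:ℝ)) := by
    rw [e1, e2]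
    have hco : ENNReal.ofReal ((n:ℝ) / ((n:ℝ) - α)) = 1 + ENNReal.ofReal (α / ((n:ℝ) - α)) := by
      rw [← ENNReal.ofReal_one,
        ← ENNReal.ofReal_add zero_le_one (div_nonneg hα0 (by linarith))]
      congr 1
      have hne : (n:ℝ) - α ≠ 0 := by linarith
      field_simp
      ring
    rw [hco]; ring
  have hbound' : (∫⁻ y in ball x r, ENNReal.ofReal |f y|) ≤
      ENNReal.ofReal ((n:ℝ) / ((n:ℝ) - α)) * S * V ^ (1 - α / (n:ℝ)) := hRHS ▸ hbound
  calc V ^ (α / (n:ℝ) - 1) * (∫⁻ y in ball x r, ENNReal.ofReal |f y|)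
      ≤ V ^ (α / (n:ℝ) - 1)
          * (ENNReal.ofReal ((n:ℝ) / ((n:ℝ) - α)) * S * V ^ (1 - α / (n:ℝ))) := by gcongr
    _ = ENNReal.ofReal ((n:ℝ) / ((n:ℝ) - α)) * S
          * (V ^ (α / (n:ℝ) - 1) * V ^ (1 - α / (n:ℝ))) := by ring
    _ = ENNReal.ofReal ((n:ℝ) / ((n:ℝ) - α)) * S := by
        rw [← ENNReal.rpow_add _ _ hV0 hVT,
          show α / (n:ℝ) - 1 + (1 - α / (n:ℝ)) = 0 from by ring, ENNReal.rpow_zero, mul_one]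
end

section
/- Let 0 ≤ α < n. There exists a positive constant C, depending only on n and α, such that for all f ∈ L¹_loc(ℝⁿ) and all t > 0, (M_α f)*(t) ≤ C · sup_{t < τ < ∞} τ^{α/n} f**(τ), where f**(τ) := (1/τ) ∫₀^τ f*(s) ds. -/
open MeasureTheory ENNReal Set Metric

section AuxLemmas
variable {n : ℕ}

lemma rearr_antitone (g : EuclideanSpace ℝ (Fin n) → ℝ≥0∞) : Antitone (rearr n g) :=
  fun _ _ h => sInf_le_sInf (fun _ hl => hl.trans (ENNReal.ofReal_le_ofReal h))

lemma meas_lt_le_of_rearr_le {g : EuclideanSpace ℝ (Fin n) → ℝ≥0∞} {s : ℝ} {l : ℝ≥0∞}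
    (hl : l ≠ ⊤) (h : rearr n g s ≤ l) : volume {x | l < g x} ≤ ENNReal.ofReal s := by
  have main : ∀ l', l < l' → volume {x | l' < g x} ≤ ENNReal.ofReal s := by
    intro l' hl'
    rcases sInf_lt_iff.mp (lt_of_le_of_lt h hl') with ⟨b, hb, hbl⟩
    exact le_trans (measure_mono (fun x hx => hbl.trans hx)) hb
  have hU : {x | l < g x} = ⋃ k : ℕ, {x | l + ((k : ℝ≥0∞) + 1)⁻¹ < g x} := by
    ext x
    simp only [mem_setOf_eq, mem_iUnion]
    constructor
    · intro hx
      rcases ENNReal.exists_inv_nat_lt (tsub_pos_of_lt hx).ne' with ⟨m, hm⟩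
      refine ⟨m, ?_⟩
      calc l + ((m : ℝ≥0∞) + 1)⁻¹ ≤ l + ((m : ℝ≥0∞))⁻¹ := by gcongr; exact le_self_add
        _ < l + (g x - l) := ENNReal.add_lt_add_left hl hm
        _ = g x := add_tsub_cancel_of_le hx.le
    · rintro ⟨k, hk⟩
      exact lt_of_le_of_lt le_self_add hk
  have hmono : Monotone (fun k : ℕ => {x | l + ((k : ℝ≥0∞) + 1)⁻¹ < g x}) := by
    intro k k' hk x hx
    refine lt_of_le_of_lt (add_le_add le_rfl (ENNReal.inv_le_inv.mpr ?_)) hx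
    exact add_le_add (by exact_mod_cast hk) le_rfl
  rw [hU, hmono.directed_le.measure_iUnion]
  refine iSup_le fun k => main _ (ENNReal.lt_add_right hl (by simp))

lemma key_lower (g : EuclideanSpace ℝ (Fin n) → ℝ≥0∞) {T : ℝ} (hT : 0 < T) :
    ∫⁻ l in Ioi (0:ℝ), min (ENNReal.ofReal T) (volume {x | ENNReal.ofReal l < g x}) ≤
      ∫⁻ s in Ioc (0:ℝ) T, rearr n g s := by
  by_cases htop : ∃ s ∈ Ioc (0:ℝ) T, rearr n g s = ⊤
  · rcases htop with ⟨s, hs, h⟩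
    have h1 : (⊤ : ℝ≥0∞) ≤ ∫⁻ s' in Ioc (0:ℝ) T, rearr n g s' := by
      calc (⊤ : ℝ≥0∞) = ⊤ * volume (Ioc (0:ℝ) s) := by
            rw [Real.volume_Ioc, sub_zero,
              ENNReal.top_mul (by simp [ENNReal.ofReal_eq_zero, not_le, hs.1])]
        _ = ∫⁻ _ in Ioc (0:ℝ) s, (⊤:ℝ≥0∞) := (setLIntegral_const _ _).symm
        _ ≤ ∫⁻ s' in Ioc (0:ℝ) s, rearr n g s' := by
            refine setLIntegral_mono' measurableSet_Ioc fun s' hs' => ?_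
            rw [← h]
            exact rearr_antitone g hs'.2
        _ ≤ ∫⁻ s' in Ioc (0:ℝ) T, rearr n g s' := lintegral_mono_set (Ioc_subset_Ioc_right hs.2)
    exact le_trans le_top h1
  · push_neg at htop
    set u : ℝ → ℝ := fun s => (rearr n g s).toReal with hu
    have hmeasr : Measurable (rearr n g) := (rearr_antitone g).measurable
    have hmeasu : Measurable u := ENNReal.measurable_toReal.comp hmeasr
    have step1 : ∫⁻ s in Ioc (0:ℝ) T, rearr n g s = ∫⁻ s in Ioc (0:ℝ) T, ENNReal.ofReal (u s) := by
      refine setLIntegral_congr_fun measurableSet_Ioc (fun s hs => ?_)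
      rw [hu]; exact (ENNReal.ofReal_toReal (htop s hs)).symm
    rw [step1, lintegral_eq_lintegral_meas_lt (volume.restrict (Ioc (0:ℝ) T))
      (ae_of_all _ fun s => ENNReal.toReal_nonneg) hmeasu.aemeasurable]
    refine lintegral_mono_ae ((ae_restrict_iff' measurableSet_Ioi).2 (ae_of_all _ fun l hl => ?_))
    rw [Measure.restrict_apply' measurableSet_Ioc]
    set D := volume {x | ENNReal.ofReal l < g x} with hD
    have claim : ∀ s, 0 < s → s ≤ T → ENNReal.ofReal s < D → l < u s := by
      intro s hs0 hsT hsD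
      have h1 : ENNReal.ofReal l < rearr n g s := by
        by_contra hcon
        push_neg at hcon
        exact absurd (meas_lt_le_of_rearr_le ENNReal.ofReal_ne_top hcon) (not_le.mpr hsD)
      have := ENNReal.toReal_strict_mono (htop s ⟨hs0, hsT⟩) h1
      rwa [ENNReal.toReal_ofReal (le_of_lt hl)] at this
    rcases le_or_gt (ENNReal.ofReal T) D with hcase | hcase
    · rw [min_eq_left hcase]
      have hsub : Ioo (0:ℝ) T ⊆ {s | l < u s} ∩ Ioc 0 T := by
        intro s hs
        refine ⟨claim s hs.1 hs.2.le (lt_of_lt_of_le ?_ hcase), hs.1, hs.2.le⟩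
        exact ENNReal.ofReal_lt_ofReal_iff_of_nonneg hs.1.le |>.mpr hs.2
      calc ENNReal.ofReal T = volume (Ioo (0:ℝ) T) := by rw [Real.volume_Ioo, sub_zero]
        _ ≤ _ := measure_mono hsub
    · have hDtop : D ≠ ⊤ := (lt_of_lt_of_le hcase le_top).ne
      rw [min_eq_right hcase.le]
      have hDT : D.toReal < T := by
        have := ENNReal.toReal_strict_mono ENNReal.ofReal_ne_top hcase
        rwa [ENNReal.toReal_ofReal hT.le] at this
      have hsub : Ioo (0:ℝ) D.toReal ⊆ {s | l < u s} ∩ Ioc 0 T := by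
        intro s hs
        have hsD : ENNReal.ofReal s < D := by
          rw [← ENNReal.ofReal_toReal hDtop]
          exact ENNReal.ofReal_lt_ofReal_iff_of_nonneg hs.1.le |>.mpr hs.2
        exact ⟨claim s hs.1 (le_of_lt (hs.2.trans hDT)) hsD, hs.1, (hs.2.trans hDT).le⟩
      calc D = volume (Ioo (0:ℝ) D.toReal) := by
            rw [Real.volume_Ioo, sub_zero, ENNReal.ofReal_toReal hDtop]
        _ ≤ _ := measure_mono hsub

lemma upper_layer {h : EuclideanSpace ℝ (Fin n) → ℝ} (hm : AEMeasurable h volume)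
    (hh : ∀ x, 0 ≤ h x) {W : Set (EuclideanSpace ℝ (Fin n))} (hW : MeasurableSet W)
    (M : ℝ → ℝ≥0∞) (hM : ∀ l, 0 < l → volume ({x | l < h x} ∩ W) ≤ M l) :
    ∫⁻ x in W, ENNReal.ofReal (h x) ≤ ∫⁻ l in Ioi (0:ℝ), M l := by
  rw [lintegral_eq_lintegral_meas_lt (volume.restrict W) (ae_of_all _ hh) hm.restrict]
  refine lintegral_mono_ae ((ae_restrict_iff' measurableSet_Ioi).2 (ae_of_all _ fun l hl => ?_))
  rw [Measure.restrict_apply' hW]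
  exact hM l hl

end AuxLemmas

/-- for `0 ≤ α < n` there is `C > 0` (depending only on `n, α`) with
`(M_α f)*(t) ≤ C · sup_{t<τ<∞} τ^{α/n} f**(τ)` for all `f ∈ L¹_loc(ℝⁿ)` and all `t > 0`. -/
theorem stmt_3 (n : ℕ) (α : ℝ) (hα0 : 0 ≤ α) (hαn : α < n) :
    ∃ C : ℝ, 0 < C ∧ ∀ f : EuclideanSpace ℝ (Fin n) → ℝ, LocallyIntegrable f volume →
      ∀ t : ℝ, 0 < t →
        rearr n (fracMax n α f) t ≤
          ENNReal.ofReal C *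
            ⨆ τ : {τ : ℝ // t < τ}, ENNReal.ofReal (τ.1 ^ (α / n)) * dstar n f τ.1 := by
  have hn : 0 < n := by
    by_contra hcon
    push_neg at hcon
    interval_cases n
    · simp at hαn; linarith
  have hn' : (0:ℝ) < n := by exact_mod_cast hn
  set C : ℝ := 2 + 2 * 4 ^ n with hC
  have hC2 : 2 < C := by
    have : (0:ℝ) < 4 ^ n := by positivity
    simp only [hC]; linarith
  have hC0 : 0 < C := by linarith
  have hC1 : 1 ≤ C := by linarith
  refine ⟨C, hC0, ?_⟩
  intro f hf t ht
  set g : EuclideanSpace ℝ (Fin n) → ℝ≥0∞ := fun y => ENNReal.ofReal |f y| with hg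
  set S := ⨆ τ : {τ : ℝ // t < τ}, ENNReal.ofReal (τ.1 ^ (α / n)) * dstar n f τ.1 with hS
  suffices hE : volume {x | ENNReal.ofReal C * S < fracMax n α f x} ≤ ENNReal.ofReal t by
    exact sInf_le hE
  have hfab : AEMeasurable (fun y => |f y|) volume := by
    have := hf.aestronglyMeasurable.norm.aemeasurable
    simpa [Real.norm_eq_abs] using this
  set A := ∫⁻ s in Ioc (0:ℝ) t, rearr n g s with hA
  have hαn' : 0 ≤ α / n := div_nonneg hα0 hn'.le
  have htpow : (0:ℝ) < t ^ (α / n) := Real.rpow_pos_of_pos ht _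
  set c₁ : ℝ := t ^ (α / (n:ℝ)) / (2 * t) with hc₁
  have hc₁0 : 0 < c₁ := by positivity
  -- lower bound on S
  have hSlow : ENNReal.ofReal c₁ * A ≤ S := by
    have h2t : t < 2 * t := by linarith
    have hle : ENNReal.ofReal ((2*t) ^ (α / n)) * dstar n f (2*t) ≤ S := by
      rw [hS]
      exact le_iSup (fun τ : {τ : ℝ // t < τ} =>
        ENNReal.ofReal (τ.1 ^ (α / n)) * dstar n f τ.1) ⟨2*t, h2t⟩
    refine le_trans ?_ hle
    have hAsub : A ≤ ∫⁻ s in Ioc (0:ℝ) (2*t), rearr n g s :=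
      lintegral_mono_set (Ioc_subset_Ioc_right (by linarith))
    have hpowle : t ^ (α / n) ≤ (2*t) ^ (α / n) :=
      Real.rpow_le_rpow ht.le (by linarith) hαn'
    calc ENNReal.ofReal c₁ * A
        = ENNReal.ofReal (t ^ (α/n)) * (ENNReal.ofReal (1/(2*t)) * A) := by
          rw [← mul_assoc, ← ENNReal.ofReal_mul htpow.le, hc₁, div_eq_mul_one_div]
      _ ≤ ENNReal.ofReal ((2*t) ^ (α/n)) *
            (ENNReal.ofReal (1/(2*t)) * ∫⁻ s in Ioc (0:ℝ) (2*t), rearr n g s) := by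
          exact mul_le_mul' (ENNReal.ofReal_le_ofReal hpowle) (mul_le_mul' le_rfl hAsub)
      _ = ENNReal.ofReal ((2*t) ^ (α / n)) * dstar n f (2*t) := by rw [dstar]
  by_cases hStop : S = ⊤
  · have : ENNReal.ofReal C * S = ⊤ := by
      rw [hStop, ENNReal.mul_top]
      simp [ENNReal.ofReal_eq_zero, not_le, hC0]
    simp only [this, not_top_lt, setOf_false, measure_empty]
    exact zero_le
  have hAfin : A ≠ ⊤ := by
    intro hcon
    apply hStop
    refine top_le_iff.mp (le_trans ?_ hSlow)
    rw [hcon, ENNReal.mul_top (by simp [ENNReal.ofReal_eq_zero, not_le, hc₁0])]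
  by_cases hA0 : A = 0
  · -- degenerate case : f = 0 a.e., fracMax = 0
    have hstar0 : ∀ s ∈ Ioc (0:ℝ) t, rearr n g s = 0 := by
      intro s hs
      by_contra hpos
      have h1 : rearr n g s * ENNReal.ofReal s ≤ A := by
        calc rearr n g s * ENNReal.ofReal s
            = ∫⁻ _ in Ioc (0:ℝ) s, rearr n g s := by
              rw [setLIntegral_const, Real.volume_Ioc, sub_zero]
          _ ≤ ∫⁻ s' in Ioc (0:ℝ) s, rearr n g s' :=
              setLIntegral_mono' measurableSet_Ioc (fun s' hs' => rearr_antitone g hs'.2)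
          _ ≤ A := lintegral_mono_set (Ioc_subset_Ioc_right hs.2)
      rw [hA0] at h1
      rcases mul_eq_zero.mp (le_antisymm h1 (zero_le)) with h | h
      · exact hpos h
      · exact absurd h (by simp [ENNReal.ofReal_eq_zero, not_le, hs.1])
    have hd0 : ∀ l : ℝ≥0∞, l ≠ 0 → volume {x | l < g x} = 0 := by
      intro l hl
      have hds : ∀ s ∈ Ioc (0:ℝ) t, volume {x | l < g x} ≤ ENNReal.ofReal s := by
        intro s hs
        have h2 : rearr n g s < l := by
          rw [hstar0 s hs]; exact pos_iff_ne_zero.mpr hl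
        rcases sInf_lt_iff.mp h2 with ⟨b, hb, hbl⟩
        exact le_trans (measure_mono (fun x hx => hbl.trans hx)) hb
      by_contra hdne
      set D := volume {x | l < g x} with hD
      have hDt : D ≤ ENNReal.ofReal t := hds t ⟨ht, le_rfl⟩
      have hDtop : D ≠ ⊤ := (lt_of_le_of_lt hDt ENNReal.ofReal_lt_top).ne
      have hD0 : 0 < D.toReal := ENNReal.toReal_pos hdne hDtop
      set s := min t (D.toReal / 2) with hsdef
      have hs0 : 0 < s := lt_min ht (by linarith)
      have hsle := hds s ⟨hs0, min_le_left _ _⟩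
      have hlt : ENNReal.ofReal s < D := by
        rw [← ENNReal.ofReal_toReal hDtop]
        refine (ENNReal.ofReal_lt_ofReal_iff_of_nonneg hs0.le).mpr ?_
        calc s ≤ D.toReal / 2 := min_le_right _ _
          _ < D.toReal := by linarith
      exact absurd hsle (not_le.mpr hlt)
    have hvolg : volume {x | g x ≠ 0} = 0 := by
      refine measure_mono_null ?_ (measure_iUnion_null
        (fun k : ℕ => hd0 ((k : ℝ≥0∞) + 1)⁻¹ (by simp)))
      intro x hx
      rcases ENNReal.exists_inv_nat_lt hx with ⟨m, hm⟩
      exact mem_iUnion.mpr ⟨m, lt_of_le_of_lt (ENNReal.inv_le_inv.mpr le_self_add) hm⟩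
    have hlint : ∫⁻ y, g y = 0 := by
      have : g =ᵐ[volume] 0 := by
        rw [Filter.EventuallyEq, ae_iff]
        simpa using hvolg
      rw [lintegral_congr_ae this]; simp
    have hzero : ∀ x, fracMax n α f x = 0 := by
      intro x
      rw [fracMax]
      refine le_antisymm (iSup_le fun r => ?_) (zero_le)
      have hz : ∫⁻ y in ball x r.1, ENNReal.ofReal |f y| = 0 :=
        le_antisymm (le_trans (setLIntegral_le_lintegral _ _) hlint.le) (zero_le)
      rw [hz, mul_zero]
    have hempty : {x | ENNReal.ofReal C * S < fracMax n α f x} = ∅ := by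
      ext x; simp [hzero x]
    rw [hempty, measure_empty]
    exact zero_le
  -- main case : 0 < A < ⊤
  set a := rearr n g t with ha
  have hF2 : ENNReal.ofReal t * a ≤ A := by
    calc ENNReal.ofReal t * a = ∫⁻ _ in Ioc (0:ℝ) t, a := by
          rw [setLIntegral_const, Real.volume_Ioc, sub_zero, mul_comm]
      _ ≤ A := setLIntegral_mono' measurableSet_Ioc fun s hs => rearr_antitone g hs.2
  have hafin : a ≠ ⊤ := by
    intro hcon
    rw [hcon, ENNReal.mul_top (by simp [ENNReal.ofReal_eq_zero, not_le, ht])] at hF2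
    exact hAfin (top_le_iff.mp hF2)
  set a' := a.toReal with ha'
  have ha'0 : 0 ≤ a' := ENNReal.toReal_nonneg
  have haa' : ENNReal.ofReal a' = a := ENNReal.ofReal_toReal hafin
  have hda : volume {x | a < g x} ≤ ENNReal.ofReal t := meas_lt_le_of_rearr_le hafin le_rfl
  set h₁ : EuclideanSpace ℝ (Fin n) → ℝ := fun x => max (|f x| - a') 0 with hh₁
  have hmeah₁ : AEMeasurable h₁ volume := (hfab.sub aemeasurable_const).max aemeasurable_const
  have hF3 : ∫⁻ x, ENNReal.ofReal (h₁ x) ≤ A := by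
    have h1 : ∫⁻ x in univ, ENNReal.ofReal (h₁ x) ≤
        ∫⁻ l in Ioi (0:ℝ), min (ENNReal.ofReal t) (volume {x | ENNReal.ofReal l < g x}) := by
      refine upper_layer hmeah₁ (fun x => le_max_right _ _) MeasurableSet.univ _ ?_
      intro l hl
      rw [inter_univ]
      have hset : {x | l < h₁ x} = {x | ENNReal.ofReal (l + a') < g x} := by
        ext x
        simp only [hh₁, mem_setOf_eq]
        constructor
        · intro hx
          rcases lt_max_iff.mp hx with h | h
          · exact (ENNReal.ofReal_lt_ofReal_iff_of_nonneg (by positivity)).mpr (by linarith)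
          · linarith
        · intro hx
          have := (ENNReal.ofReal_lt_ofReal_iff_of_nonneg (by positivity)).mp hx
          exact lt_max_iff.mpr (Or.inl (by linarith))
      rw [hset]
      refine le_min ?_ ?_
      · refine le_trans (measure_mono ?_) hda
        intro x hx
        simp only [mem_setOf_eq] at hx ⊢
        refine lt_of_le_of_lt ?_ hx
        rw [← haa']
        exact ENNReal.ofReal_le_ofReal (by linarith)
      · exact measure_mono fun x hx =>
          lt_of_le_of_lt (ENNReal.ofReal_le_ofReal (by linarith)) hx
    rw [setLIntegral_univ] at h1
    exact le_trans h1 (key_lower g ht)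
  have hApos : A ≠ 0 := hA0
  set κ := ENNReal.ofReal ((C - 2) / (2 * t)) * A with hκ
  have hz0 : (0:ℝ) < (C - 2) / (2 * t) := by
    apply div_pos (by linarith) (by linarith)
  have hκ0 : κ ≠ 0 :=
    mul_ne_zero (by simp [ENNReal.ofReal_eq_zero, not_le, hz0]) hApos
  have hκtop : κ ≠ ⊤ := ENNReal.mul_ne_top ENNReal.ofReal_ne_top hAfin
  have hballs : ∀ x ∈ {x | ENNReal.ofReal C * S < fracMax n α f x}, ∃ ρ : ℝ, 0 < ρ ∧
      volume (ball x ρ) ≤ ENNReal.ofReal t ∧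
      κ * volume (ball x ρ) ≤ ∫⁻ y in ball x ρ, ENNReal.ofReal (h₁ y) := by
    intro x hx
    rw [mem_setOf_eq, fracMax, lt_iSup_iff] at hx
    obtain ⟨⟨ρ, hρ⟩, hwit⟩ := hx
    set v := volume (ball x ρ) with hv
    have hv0 : v ≠ 0 := (measure_ball_pos volume x hρ).ne'
    have hvtop : v ≠ ⊤ := measure_ball_lt_top.ne
    have hIle : ∀ T : ℝ, 0 < T → v ≤ ENNReal.ofReal T →
        (∫⁻ y in ball x ρ, ENNReal.ofReal |f y|) ≤ ∫⁻ s in Ioc (0:ℝ) T, rearr n g s := by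
      intro T hT hvT
      refine le_trans (upper_layer hfab (fun y => abs_nonneg _) measurableSet_ball
        (fun l => min (ENNReal.ofReal T) (volume {y | ENNReal.ofReal l < g y})) ?_)
        (key_lower g hT)
      intro l hl
      refine le_min (le_trans (measure_mono inter_subset_right) hvT)
        (measure_mono fun y hy => ?_)
      exact (ENNReal.ofReal_lt_ofReal_iff_of_nonneg hl.le).mpr hy.1
    have hstep1 : v ≤ ENNReal.ofReal t := by
      by_contra hvt
      push_neg at hvt
      set b := v.toReal with hb
      have hb0 : 0 < b := ENNReal.toReal_pos hv0 hvtop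
      have htb : t < b := by
        have := ENNReal.toReal_strict_mono hvtop hvt
        rwa [ENNReal.toReal_ofReal ht.le] at this
      have hvb : v = ENNReal.ofReal b := (ENNReal.ofReal_toReal hvtop).symm
      have hmain : v ^ (α / (n:ℝ) - 1) * ∫⁻ y in ball x ρ, ENNReal.ofReal |f y| ≤ S := by
        calc v ^ (α / (n:ℝ) - 1) * ∫⁻ y in ball x ρ, ENNReal.ofReal |f y|
            ≤ ENNReal.ofReal (b ^ (α/(n:ℝ) - 1)) * ∫⁻ s in Ioc (0:ℝ) b, rearr n g s := by
              rw [hvb, ENNReal.ofReal_rpow_of_pos hb0]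
              exact mul_le_mul' le_rfl (hIle b hb0 (le_of_eq hvb))
          _ = ENNReal.ofReal (b ^ (α/(n:ℝ))) *
                (ENNReal.ofReal (1/b) * ∫⁻ s in Ioc (0:ℝ) b, rearr n g s) := by
              rw [← mul_assoc, ← ENNReal.ofReal_mul (by positivity)]
              congr 2
              rw [Real.rpow_sub hb0, Real.rpow_one, div_eq_mul_one_div]
          _ = ENNReal.ofReal (b ^ (α / (n:ℝ))) * dstar n f b := by rw [dstar]
          _ ≤ S := by
              rw [hS]
              exact le_iSup (fun τ : {τ : ℝ // t < τ} =>
                ENNReal.ofReal (τ.1 ^ (α / (n:ℝ))) * dstar n f τ.1) ⟨b, htb⟩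
      have hCS : S ≤ ENNReal.ofReal C * S := by
        nth_rewrite 1 [← one_mul S]
        exact mul_le_mul' (ENNReal.one_le_ofReal.mpr hC1) le_rfl
      exact lt_irrefl _ (lt_of_lt_of_le hwit (le_trans hmain hCS))
    refine ⟨ρ, hρ, hstep1, ?_⟩
    set I := ∫⁻ y in ball x ρ, ENNReal.ofReal |f y| with hI
    have hlow : ENNReal.ofReal (C/(2*t)) * A * v ≤ I := by
      have h1 : ENNReal.ofReal C * (ENNReal.ofReal c₁ * A) ≤ v ^ (α/(n:ℝ) - 1) * I :=
        le_trans (mul_le_mul' le_rfl hSlow) hwit.le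
      have h2 : ENNReal.ofReal C * (ENNReal.ofReal c₁ * A) * v ^ (1 - α/(n:ℝ)) ≤ I := by
        have h3 := mul_le_mul' h1 (le_refl (v ^ (1 - α/(n:ℝ))))
        rwa [mul_comm (v ^ (α/(n:ℝ) - 1)) I,
          mul_assoc I (v ^ (α/(n:ℝ) - 1)) (v ^ (1 - α/(n:ℝ))), ← ENNReal.rpow_add _ _ hv0 hvtop,
          show α/(n:ℝ) - 1 + (1 - α/(n:ℝ)) = 0 by ring, ENNReal.rpow_zero, mul_one] at h3
      refine le_trans ?_ h2
      have hw : v * ENNReal.ofReal ((t ^ (α/(n:ℝ)))⁻¹) ≤ v ^ (1 - α/(n:ℝ)) := by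
        have hrw : v ^ (1 - α/(n:ℝ)) = v * (v ^ (α/(n:ℝ)))⁻¹ := by
          rw [show (1 - α/(n:ℝ)) = 1 + (-(α/(n:ℝ))) by ring,
            ENNReal.rpow_add _ _ hv0 hvtop, ENNReal.rpow_one, ENNReal.rpow_neg]
        rw [hrw]
        refine mul_le_mul' le_rfl ?_
        rw [ENNReal.ofReal_inv_of_pos htpow]
        refine ENNReal.inv_le_inv.mpr ?_
        calc v ^ (α/(n:ℝ)) ≤ (ENNReal.ofReal t) ^ (α/(n:ℝ)) := ENNReal.rpow_le_rpow hstep1 hαn'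
          _ = ENNReal.ofReal (t ^ (α/(n:ℝ))) := ENNReal.ofReal_rpow_of_pos ht
      calc ENNReal.ofReal (C/(2*t)) * A * v
          = ENNReal.ofReal C * (ENNReal.ofReal c₁ * A) *
              (v * ENNReal.ofReal ((t ^ (α/(n:ℝ)))⁻¹)) := by
            have hre : C/(2*t) = C * c₁ * (t ^ (α/(n:ℝ)))⁻¹ := by
              rw [hc₁]
              field_simp
            rw [hre, ENNReal.ofReal_mul (by positivity), ENNReal.ofReal_mul hC0.le]
            ring
        _ ≤ ENNReal.ofReal C * (ENNReal.ofReal c₁ * A) * v ^ (1 - α/(n:ℝ)) :=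
            mul_le_mul' le_rfl hw
    have hup : I ≤ (∫⁻ y in ball x ρ, ENNReal.ofReal (h₁ y)) + a * v := by
      calc I ≤ ∫⁻ y in ball x ρ, (ENNReal.ofReal (h₁ y) + a) := by
            refine lintegral_mono fun y => ?_
            have hy : |f y| ≤ max (|f y| - a') 0 + a' := by
              rcases le_total (|f y| - a') 0 with h | h
              · rw [max_eq_right h]; linarith
              · rw [max_eq_left h]; linarith
            calc ENNReal.ofReal |f y| ≤ ENNReal.ofReal (max (|f y| - a') 0 + a') :=
                  ENNReal.ofReal_le_ofReal hy
              _ = ENNReal.ofReal (h₁ y) + a := by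
                  rw [ENNReal.ofReal_add (le_max_right _ _) ha'0, haa']
        _ = (∫⁻ y in ball x ρ, ENNReal.ofReal (h₁ y)) + a * v := by
            rw [lintegral_add_right _ measurable_const, setLIntegral_const]
    have hav : a * v ≤ ENNReal.ofReal (1/t) * A * v := by
      refine mul_le_mul' ?_ le_rfl
      calc a = ENNReal.ofReal (1/t) * (ENNReal.ofReal t * a) := by
            rw [← mul_assoc, ← ENNReal.ofReal_mul (by positivity), one_div,
              inv_mul_cancel₀ ht.ne', ENNReal.ofReal_one, one_mul]
        _ ≤ ENNReal.ofReal (1/t) * A := mul_le_mul' le_rfl hF2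
    have hsum : κ * v + ENNReal.ofReal (1/t) * A * v ≤
        (∫⁻ y in ball x ρ, ENNReal.ofReal (h₁ y)) + ENNReal.ofReal (1/t) * A * v := by
      calc κ * v + ENNReal.ofReal (1/t) * A * v
          = ENNReal.ofReal (C/(2*t)) * A * v := by
            rw [hκ]
            have harith : (C-2)/(2*t) + 1/t = C/(2*t) := by
              field_simp
              ring
            rw [← harith, ENNReal.ofReal_add (by positivity) (by positivity)]
            ring
        _ ≤ I := hlow
        _ ≤ _ := le_trans hup (add_le_add le_rfl hav)
    exact (ENNReal.add_le_add_iff_right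
      (ENNReal.mul_ne_top (ENNReal.mul_ne_top ENNReal.ofReal_ne_top hAfin) hvtop)).mp hsum
  choose! ρ hρ0 hρt hρκ using hballs
  set W := volume (ball (0 : EuclideanSpace ℝ (Fin n)) 1) with hW
  have hW0 : W ≠ 0 := (measure_ball_pos volume _ one_pos).ne'
  have hWtop : W ≠ ⊤ := measure_ball_lt_top.ne
  set K := (ENNReal.ofReal t / W).toReal with hK
  have hbound : ∀ x ∈ {x | ENNReal.ofReal C * S < fracMax n α f x}, ρ x ≤ max 1 K := by
    intro x hx
    have hball : volume (ball x (ρ x)) = ENNReal.ofReal (ρ x ^ n) * W := by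
      rw [Measure.addHaar_ball_of_pos volume x (hρ0 x hx), finrank_euclideanSpace_fin]
    have h1 : ENNReal.ofReal (ρ x ^ n) ≤ ENNReal.ofReal t / W := by
      rw [ENNReal.le_div_iff_mul_le (Or.inl hW0) (Or.inl hWtop), ← hball]
      exact hρt x hx
    have h2 : ρ x ^ n ≤ K := by
      rw [hK]
      refine (ENNReal.ofReal_le_iff_le_toReal ?_).mp h1
      exact (ENNReal.div_lt_top ENNReal.ofReal_ne_top hW0).ne
    rcases le_total (ρ x) 1 with h | h
    · exact le_max_of_le_left h
    · exact le_max_of_le_right (le_trans (le_self_pow₀ h hn.ne') h2)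
  obtain ⟨u, huE, hdisj, hcov⟩ := Vitali.exists_disjoint_subfamily_covering_enlargement_closedBall
    {x | ENNReal.ofReal C * S < fracMax n α f x} id ρ (max 1 K) hbound 4 (by norm_num)
  have hpairdisj : Pairwise (Function.onFun Disjoint fun b : ↥u =>
      closedBall (b : EuclideanSpace ℝ (Fin n)) (ρ (b : EuclideanSpace ℝ (Fin n)))) := by
    intro i j hij
    exact hdisj i.2 j.2 (fun hc => hij (Subtype.ext hc))
  have hucnt : u.Countable := by
    have hcnt2 := MeasureTheory.Measure.countable_meas_pos_of_disjoint_iUnion (μ := volume)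
      (fun b : ↥u => measurableSet_closedBall) hpairdisj
    have hall : {i : ↥u | 0 < volume (closedBall (i : EuclideanSpace ℝ (Fin n))
        (ρ (i : EuclideanSpace ℝ (Fin n))))} = univ := by
      refine eq_univ_of_forall fun i => ?_
      exact lt_of_lt_of_le (measure_ball_pos volume _ (hρ0 i (huE i.2)))
        (measure_mono ball_subset_closedBall)
    rw [hall] at hcnt2
    exact Set.countable_coe_iff.mp (Set.countable_univ_iff.mp hcnt2)
  haveI : Countable ↥u := hucnt.to_subtype
  haveI : Nontrivial (EuclideanSpace ℝ (Fin n)) := by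
    refine Module.nontrivial_of_finrank_pos (R := ℝ) ?_
    rw [finrank_euclideanSpace_fin]
    exact hn
  have hEcov : {x | ENNReal.ofReal C * S < fracMax n α f x} ⊆
      ⋃ b ∈ u, closedBall b (4 * ρ b) := by
    intro x hx
    obtain ⟨b, hb, hsub⟩ := hcov x hx
    exact mem_biUnion hb (hsub (mem_closedBall_self (hρ0 x hx).le))
  have hdisj2 : Pairwise (Function.onFun Disjoint fun b : ↥u =>
      ball (b : EuclideanSpace ℝ (Fin n)) (ρ (b : EuclideanSpace ℝ (Fin n)))) := by
    intro i j hij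
    exact (hpairdisj hij).mono ball_subset_closedBall ball_subset_closedBall
  calc volume {x | ENNReal.ofReal C * S < fracMax n α f x}
      ≤ volume (⋃ b ∈ u, closedBall b (4 * ρ b)) := measure_mono hEcov
    _ ≤ ∑' b : ↥u, volume (closedBall (b : EuclideanSpace ℝ (Fin n))
          (4 * ρ (b : EuclideanSpace ℝ (Fin n)))) := measure_biUnion_le volume hucnt _
    _ ≤ ∑' b : ↥u, ENNReal.ofReal ((4:ℝ)^n) * κ⁻¹ *
          ∫⁻ y in ball (b : EuclideanSpace ℝ (Fin n)) (ρ (b : EuclideanSpace ℝ (Fin n))),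
            ENNReal.ofReal (h₁ y) := by
        refine ENNReal.tsum_le_tsum fun b => ?_
        have hb := huE b.2
        have h4 : volume (closedBall (b : EuclideanSpace ℝ (Fin n))
            (4 * ρ (b : EuclideanSpace ℝ (Fin n)))) =
            ENNReal.ofReal ((4:ℝ)^n) * volume (ball (b : EuclideanSpace ℝ (Fin n))
              (ρ (b : EuclideanSpace ℝ (Fin n)))) := by
          rw [Measure.addHaar_closedBall_mul_of_pos volume _ (by norm_num : (0:ℝ) < 4),
            finrank_euclideanSpace_fin, Measure.addHaar_closedBall_eq_addHaar_ball]
          exact congrArg (fun z => ENNReal.ofReal ((4:ℝ)^n) * z)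
            (Measure.addHaar_ball_center volume _ _).symm
        rw [h4, mul_assoc]
        refine mul_le_mul' le_rfl ?_
        have hκv := hρκ b hb
        calc volume (ball (b : EuclideanSpace ℝ (Fin n)) (ρ (b : EuclideanSpace ℝ (Fin n))))
            = κ⁻¹ * (κ * volume (ball (b : EuclideanSpace ℝ (Fin n))
                (ρ (b : EuclideanSpace ℝ (Fin n))))) := by
              rw [← mul_assoc, ENNReal.inv_mul_cancel hκ0 hκtop, one_mul]
          _ ≤ κ⁻¹ * _ := mul_le_mul' le_rfl hκv
    _ = ENNReal.ofReal ((4:ℝ)^n) * κ⁻¹ *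
          ∑' b : ↥u, ∫⁻ y in ball (b : EuclideanSpace ℝ (Fin n))
            (ρ (b : EuclideanSpace ℝ (Fin n))), ENNReal.ofReal (h₁ y) :=
        ENNReal.tsum_mul_left
    _ ≤ ENNReal.ofReal ((4:ℝ)^n) * κ⁻¹ * A := by
        refine mul_le_mul' le_rfl ?_
        rw [← lintegral_iUnion (fun b => measurableSet_ball) hdisj2]
        exact le_trans (setLIntegral_le_lintegral _ _) hF3
    _ ≤ ENNReal.ofReal t := by
        rw [hκ, ENNReal.mul_inv (Or.inl (by simp [ENNReal.ofReal_eq_zero, not_le, hz0]))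
          (Or.inl ENNReal.ofReal_ne_top)]
        rw [show ENNReal.ofReal ((4:ℝ)^n) *
            ((ENNReal.ofReal ((C-2)/(2*t)))⁻¹ * A⁻¹) * A =
            ENNReal.ofReal ((4:ℝ)^n) * (ENNReal.ofReal ((C-2)/(2*t)))⁻¹ * (A⁻¹ * A) by ring]
        rw [ENNReal.inv_mul_cancel hApos hAfin, mul_one,
          ← ENNReal.ofReal_inv_of_pos hz0, ← ENNReal.ofReal_mul (by positivity)]
        refine le_of_eq ?_
        congr 1
        have h4n : (0:ℝ) < 4 ^ n := by positivity
        rw [hC]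
        field_simp
        ring
end

section
/- Let 0 ≤ α < n, let φ be a non-negative non-increasing measurable function on (0,∞), and set f(x) := φ(ω_n |x|^n) for x ∈ ℝⁿ, where ω_n is the Lebesgue measure of the unit ball of ℝⁿ. Then there is a positive constant c, depending only on n and α, such that for every x ∈ ℝⁿ, M_α f(x) ≥ c · sup_{τ > ω_n |x|^n} τ^{α/n - 1} ∫₀^τ φ(σ) dσ. -/
open MeasureTheory ENNReal Set Metric

lemma key_lemma (n : ℕ) (hn : 0 < n) (φ : ℝ → ℝ) (hφm : Measurable φ)
    (hφ0 : ∀ t, 0 ≤ φ t) (hφd : AntitoneOn φ (Set.Ioi 0)) (τ r : ℝ) (hr : 0 < r)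
    (hτ : (volume (ball (0 : EuclideanSpace ℝ (Fin n)) 1)).toReal * r ^ n = τ) :
    ∫⁻ σ in Set.Ioc (0 : ℝ) τ, ENNReal.ofReal (φ σ) ≤
      ∫⁻ y in ball (0 : EuclideanSpace ℝ (Fin n)) r,
        ENNReal.ofReal (φ ((volume (ball (0 : EuclideanSpace ℝ (Fin n)) 1)).toReal * ‖y‖ ^ n)) := by
  haveI := Fin.pos_iff_nonempty.mp hn
  set E := EuclideanSpace ℝ (Fin n)
  set V : ℝ≥0∞ := volume (ball (0 : E) 1) with hV
  set ω : ℝ := V.toReal with hωdef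
  have hV0 : V ≠ 0 := (measure_ball_pos _ _ one_pos).ne'
  have hVtop : V ≠ ⊤ := measure_ball_lt_top.ne
  have hω : 0 < ω := ENNReal.toReal_pos hV0 hVtop
  have hVω : V = ENNReal.ofReal ω := (ENNReal.ofReal_toReal hVtop).symm
  have hf : Measurable fun y : E => φ (ω * ‖y‖ ^ n) :=
    hφm.comp (measurable_const.mul (measurable_norm.pow_const n))
  have A := lintegral_eq_lintegral_meas_lt (volume.restrict (Set.Ioc (0 : ℝ) τ))
    (Filter.Eventually.of_forall fun σ => hφ0 σ) hφm.aemeasurable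
  have B := lintegral_eq_lintegral_meas_lt (volume.restrict (ball (0 : E) r))
    (Filter.Eventually.of_forall fun y => hφ0 _) hf.aemeasurable
  rw [A, B]
  refine setLIntegral_mono' measurableSet_Ioi fun t ht => ?_
  rw [Measure.restrict_apply (measurableSet_lt measurable_const hφm),
    Measure.restrict_apply (measurableSet_lt measurable_const hf)]
  set S : Set ℝ := {σ | t < φ σ} ∩ Set.Ioc 0 τ with hSdef
  rcases S.eq_empty_or_nonempty with hS | hS
  · simp [hS]
  set s : ℝ := sSup S with hsdef
  have hbdd : BddAbove S := ⟨τ, fun σ hσ => hσ.2.2⟩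
  obtain ⟨σ₀, hσ₀⟩ := hS
  have hs0 : 0 < s := lt_of_lt_of_le hσ₀.2.1 (le_csSup hbdd hσ₀)
  have hsτ : s ≤ τ := csSup_le ⟨σ₀, hσ₀⟩ fun σ hσ => hσ.2.2
  have hIoo : Set.Ioo 0 s ⊆ S := by
    intro σ hσ
    obtain ⟨σ', hσ', hlt⟩ := exists_lt_of_lt_csSup ⟨σ₀, hσ₀⟩ hσ.2
    exact ⟨lt_of_lt_of_le hσ'.1 (hφd hσ.1 hσ'.2.1 hlt.le),
      hσ.1, hlt.le.trans hσ'.2.2⟩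
  have hSsub : S ⊆ Set.Ioc 0 s := fun σ hσ => ⟨hσ.2.1, le_csSup hbdd hσ⟩
  have hvolS : volume S ≤ ENNReal.ofReal s := by
    calc volume S ≤ volume (Set.Ioc 0 s) := measure_mono hSsub
    _ = ENNReal.ofReal s := by rw [Real.volume_Ioc, sub_zero]
  set ρ : ℝ := (s / ω) ^ (1 / (n : ℝ)) with hρdef
  have hsω : 0 < s / ω := div_pos hs0 hω
  have hρ : 0 < ρ := Real.rpow_pos_of_pos hsω _
  have hρn : ρ ^ n = s / ω := by
    rw [hρdef, ← Real.rpow_natCast ((s / ω) ^ (1 / (n : ℝ))) n, ← Real.rpow_mul hsω.le,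
      one_div, inv_mul_cancel₀ (by exact_mod_cast hn.ne'), Real.rpow_one]
  have hωρ : ω * ρ ^ n = s := by rw [hρn]; field_simp
  have hρr : ρ ≤ r := by
    have h1 : ρ ^ n ≤ r ^ n := by
      have := hsτ; rw [← hωρ, ← hτ] at this
      exact le_of_mul_le_mul_left this hω
    exact le_of_pow_le_pow_left₀ hn.ne' hr.le h1
  have hsub : ball (0 : E) ρ \ {0} ⊆ {y : E | t < φ (ω * ‖y‖ ^ n)} ∩ ball 0 r := by
    rintro y ⟨hy1, hy2⟩
    have hyρ : ‖y‖ < ρ := by rwa [mem_ball, dist_zero_right] at hy1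
    have hy0 : 0 < ‖y‖ := norm_pos_iff.mpr (by simpa using hy2)
    have hmem : ω * ‖y‖ ^ n ∈ Set.Ioo (0 : ℝ) s := by
      constructor
      · positivity
      · rw [← hωρ]
        exact mul_lt_mul_of_pos_left (pow_lt_pow_left₀ hyρ hy0.le hn.ne') hω
    exact ⟨(hIoo hmem).1, by rw [mem_ball, dist_zero_right]; exact hyρ.trans_le hρr⟩
  have hzero : volume ({(0 : E)} : Set E) = 0 := by
    have h : ({(0 : E)} : Set E) = closedBall 0 0 := (Metric.closedBall_zero (x := (0 : E))).symm
    rw [h, Measure.addHaar_closedBall _ _ le_rfl]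
    have hfr : Module.finrank ℝ E = n := finrank_euclideanSpace_fin
    rw [hfr, zero_pow hn.ne']
    simp
  have hballρ : volume (ball (0 : E) ρ) = ENNReal.ofReal s := by
    have hfr : Module.finrank ℝ E = n := finrank_euclideanSpace_fin
    rw [Measure.addHaar_ball _ _ hρ.le, hfr, ← hV, hVω,
      ← ENNReal.ofReal_mul (by positivity)]
    rw [mul_comm (ρ ^ n) ω, hωρ]
  calc volume S ≤ ENNReal.ofReal s := hvolS
  _ = volume (ball (0 : E) ρ) := hballρ.symm
  _ = volume (ball (0 : E) ρ \ {0}) := (measure_diff_null hzero).symm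
  _ ≤ volume ({y : E | t < φ (ω * ‖y‖ ^ n)} ∩ ball 0 r) := measure_mono hsub

/-- for `0 ≤ α < n`, `φ ≥ 0` non-increasing measurable on `(0,∞)` and
`f(x) = φ(ω_n |x|^n)`, there is `c > 0` (depending only on `n, α`) with
`M_α f (x) ≥ c · sup_{τ > ω_n |x|^n} τ^{α/n - 1} ∫₀^τ φ(σ) dσ` for every `x`. -/
theorem stmt_5 (n : ℕ) (α : ℝ) (hα0 : 0 ≤ α) (hαn : α < n)
    (φ : ℝ → ℝ) (hφm : Measurable φ) (hφ0 : ∀ t, 0 ≤ φ t) (hφd : AntitoneOn φ (Set.Ioi 0)) :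
    ∃ c : ℝ, 0 < c ∧ ∀ x : EuclideanSpace ℝ (Fin n),
      ENNReal.ofReal c *
          (⨆ τ : {τ : ℝ // (volume (ball (0 : EuclideanSpace ℝ (Fin n)) 1)).toReal * ‖x‖ ^ n < τ},
            ENNReal.ofReal (τ.1 ^ (α / n - 1)) * ∫⁻ σ in Set.Ioc (0 : ℝ) τ.1, ENNReal.ofReal (φ σ)) ≤
        fracMax n α
          (fun y => φ ((volume (ball (0 : EuclideanSpace ℝ (Fin n)) 1)).toReal * ‖y‖ ^ n)) x := by
  have hn : 0 < n := by exact_mod_cast hα0.trans_lt hαn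
  haveI := Fin.pos_iff_nonempty.mp hn
  have hnR : (0 : ℝ) < n := by exact_mod_cast hn
  refine ⟨(2 : ℝ) ^ (α - n), Real.rpow_pos_of_pos two_pos _, fun x => ?_⟩
  set V : ℝ≥0∞ := volume (ball (0 : EuclideanSpace ℝ (Fin n)) 1) with hV
  set ω : ℝ := V.toReal with hωdef
  have hV0 : V ≠ 0 := (measure_ball_pos _ _ one_pos).ne'
  have hVtop : V ≠ ⊤ := measure_ball_lt_top.ne
  have hω : 0 < ω := ENNReal.toReal_pos hV0 hVtop
  have hVω : V = ENNReal.ofReal ω := (ENNReal.ofReal_toReal hVtop).symm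
  rw [ENNReal.mul_iSup]
  refine iSup_le ?_
  rintro ⟨τ, hτ⟩
  have hτ0 : 0 < τ := lt_of_le_of_lt (by positivity) hτ
  set r : ℝ := (τ / ω) ^ (1 / (n : ℝ)) with hrdef
  have hτω : 0 < τ / ω := div_pos hτ0 hω
  have hr0 : 0 < r := Real.rpow_pos_of_pos hτω _
  have hrn : r ^ n = τ / ω := by
    rw [hrdef, ← Real.rpow_natCast ((τ / ω) ^ (1 / (n : ℝ))) n, ← Real.rpow_mul hτω.le,
      one_div, inv_mul_cancel₀ hnR.ne', Real.rpow_one]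
  have hωr : ω * r ^ n = τ := by rw [hrn]; field_simp
  have hxr : ‖x‖ < r := by
    have h1 : ‖x‖ ^ n < r ^ n := by
      have := hτ; rw [← hωr] at this
      exact lt_of_mul_lt_mul_left this hω.le
    exact lt_of_pow_lt_pow_left₀ n hr0.le h1
  -- ball inclusion
  have hball : ball (0 : EuclideanSpace ℝ (Fin n)) r ⊆ ball x (2 * r) := by
    intro y hy
    rw [mem_ball, dist_zero_right] at hy
    rw [mem_ball]
    calc dist y x ≤ ‖y‖ + ‖x‖ := by
          rw [dist_eq_norm]; exact (norm_sub_le _ _)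
    _ < r + r := add_lt_add hy hxr
    _ = 2 * r := by ring
  have hI : ∫⁻ σ in Set.Ioc (0 : ℝ) τ, ENNReal.ofReal (φ σ) ≤
      ∫⁻ y : EuclideanSpace ℝ (Fin n) in ball x (2 * r), ENNReal.ofReal (φ (ω * ‖y‖ ^ n)) :=
    (key_lemma n hn φ hφm hφ0 hφd τ r hr0 hωr).trans (lintegral_mono_set hball)
  -- volume of the big ball
  have hvol : volume (ball x (2 * r)) = ENNReal.ofReal (2 ^ n * τ) := by
    rw [Measure.addHaar_ball _ _ (by positivity : (0:ℝ) ≤ 2 * r), finrank_euclideanSpace_fin, ← hV, hVω,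
      ← ENNReal.ofReal_mul (by positivity)]
    congr 1
    rw [mul_pow, mul_assoc, mul_comm (r ^ n) ω, hωr]
  have hpow : volume (ball x (2 * r)) ^ (α / n - 1 : ℝ) =
      ENNReal.ofReal ((2:ℝ) ^ (α - n)) * ENNReal.ofReal (τ ^ (α / n - 1)) := by
    rw [hvol, ENNReal.ofReal_rpow_of_pos (by positivity),
      Real.mul_rpow (by positivity) hτ0.le, ← ENNReal.ofReal_mul (by positivity)]
    congr 2
    rw [← Real.rpow_natCast (2:ℝ) n, ← Real.rpow_mul (by norm_num)]
    congr 1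
    field_simp
  calc ENNReal.ofReal ((2:ℝ) ^ (α - n)) *
        (ENNReal.ofReal (τ ^ (α / n - 1)) * ∫⁻ σ in Set.Ioc (0 : ℝ) τ, ENNReal.ofReal (φ σ))
      = volume (ball x (2 * r)) ^ (α / n - 1 : ℝ) *
        ∫⁻ σ in Set.Ioc (0 : ℝ) τ, ENNReal.ofReal (φ σ) := by rw [hpow, mul_assoc]
    _ ≤ volume (ball x (2 * r)) ^ (α / n - 1 : ℝ) *
        ∫⁻ y : EuclideanSpace ℝ (Fin n) in ball x (2 * r), ENNReal.ofReal (φ (ω * ‖y‖ ^ n)) := mul_le_mul_right hI _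
    _ = volume (ball x (2 * r)) ^ (α / n - 1 : ℝ) *
        ∫⁻ y in ball x (2 * r), ENNReal.ofReal |φ (ω * ‖y‖ ^ n)| := by
          simp_rw [abs_of_nonneg (hφ0 _)]
    _ ≤ fracMax n α (fun y => φ (ω * ‖y‖ ^ n)) x :=
        le_iSup (fun R : {R : ℝ // 0 < R} =>
          volume (ball x R.1) ^ (α / n - 1 : ℝ) *
            ∫⁻ y in ball x R.1, ENNReal.ofReal |φ (ω * ‖y‖ ^ n)|)
          ⟨2 * r, by positivity⟩
end

section
/- Let 0 ≤ α < n, 1 < p ≤ q < ∞, 1 ≤ u ≤ s ≤ ∞, 0 < λ < n and 1 < p < (n-λ)/α. If there is a constant C > 0 such that ‖M_α f‖_{𝓛_{q,s;λ}(ℝⁿ)} ≤ C ‖f‖_{𝓛_{p,u;λ}(ℝⁿ)} for all f ∈ 𝓛_{p,u;λ}(ℝⁿ), then necessarily 1/p − 1/q = α/(n−λ). -/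
open MeasureTheory ENNReal Set Metric

lemma rearr_mono {n : ℕ} {g g' : EuclideanSpace ℝ (Fin n) → ℝ≥0∞}
    (h : ∀ x, g x ≤ g' x) (t : ℝ) : rearr n g t ≤ rearr n g' t := by
  apply sInf_le_sInf
  intro l hl
  refine le_trans (measure_mono ?_) hl
  intro x hx
  exact lt_of_lt_of_le hx (h x)

lemma rearr_indicator (n : ℕ) (E : Set (EuclideanSpace ℝ (Fin n))) (a : ℝ≥0∞) (t : ℝ) :
    rearr n (E.indicator fun _ => a) t = if volume E ≤ ENNReal.ofReal t then 0 else a := by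
  have hset : ∀ l : ℝ≥0∞, {x | l < E.indicator (fun _ => a) x} = if l < a then E else ∅ := by
    intro l
    split_ifs with hla
    · ext x
      simp only [Set.mem_setOf_eq, Set.indicator_apply]
      constructor
      · intro hx; by_contra hxE
        rw [Set.indicator_of_notMem hxE] at hx
        exact (not_lt.2 ((zero_le : 0 ≤ l))) hx
      · intro hx; rw [Set.indicator_of_mem hx]; exact hla
    · ext x
      simp only [Set.mem_setOf_eq, Set.indicator_apply, Set.mem_empty_iff_false, iff_false]
      by_cases hx : x ∈ E
      · rw [Set.indicator_of_mem hx]; exact hla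
      · rw [Set.indicator_of_notMem hx]; exact not_lt.2 ((zero_le : 0 ≤ l))
  unfold rearr
  split_ifs with hE
  · have h0 : (0 : ℝ≥0∞) ∈ {l : ℝ≥0∞ | volume {x | l < E.indicator (fun _ => a) x} ≤ ENNReal.ofReal t} := by
      simp only [Set.mem_setOf_eq, hset]
      split_ifs
      · exact hE
      · simp
    exact le_antisymm (sInf_le h0) (zero_le)
  · have h1 : {l : ℝ≥0∞ | volume {x | l < E.indicator (fun _ => a) x} ≤ ENNReal.ofReal t}
        = Set.Ici a := by
      ext l
      simp only [Set.mem_setOf_eq, hset, Set.mem_Ici]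
      split_ifs with hla
      · simp only [iff_false_intro (not_le.2 hla), iff_false]
        exact hE
      · simpa using not_lt.1 hla
    rw [h1, csInf_Ici]

lemma lint_Ioo_rpow (c β : ℝ) (hc : 0 ≤ c) (hβ : 0 < β) :
    ∫⁻ t in Set.Ioo (0:ℝ) c, ENNReal.ofReal (t ^ (β - 1)) = ENNReal.ofReal (c ^ β / β) := by
  rcases eq_or_lt_of_le hc with hc0 | hc0
  · rw [← hc0]
    simp [Real.zero_rpow (ne_of_gt hβ)]
  · have hint : IntervalIntegrable (fun t : ℝ => t ^ (β - 1)) volume 0 c :=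
      intervalIntegral.intervalIntegrable_rpow' (by linarith)
    have hIoo : IntegrableOn (fun t : ℝ => t ^ (β - 1)) (Set.Ioo (0:ℝ) c) volume := by
      rw [intervalIntegrable_iff_integrableOn_Ioc_of_le hc] at hint
      exact hint.mono_set Set.Ioo_subset_Ioc_self
    rw [← ofReal_integral_eq_lintegral_ofReal hIoo ?_]
    · congr 1
      have : ∫ t in Set.Ioo (0:ℝ) c, t ^ (β - 1) = ∫ t in (0:ℝ)..c, t ^ (β - 1) := by
        rw [intervalIntegral.integral_of_le hc, ← MeasureTheory.integral_Ioc_eq_integral_Ioo]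
      rw [this, integral_rpow (Or.inl (by linarith))]
      simp [sub_add_cancel, Real.zero_rpow (ne_of_gt hβ)]
    · filter_upwards [self_mem_ae_restrict measurableSet_Ioo] with t ht
      exact Real.rpow_nonneg ht.1.le _

noncomputable def kUp (p : ℝ) (u : ℝ≥0∞) : ℝ≥0∞ :=
  if u = ⊤ then 1 else ENNReal.ofReal ((p / u.toReal) ^ (1 / u.toReal))

lemma ofReal_rpow (x y : ℝ) (hx : 0 ≤ x) (hy : 0 < y) :
    ENNReal.ofReal x ^ y = ENNReal.ofReal (x ^ y) := by
  rcases eq_or_lt_of_le hx with h | h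
  · rw [← h]
    simp [Real.zero_rpow (ne_of_gt hy), ENNReal.zero_rpow_of_pos hy]
  · exact ENNReal.ofReal_rpow_of_pos h

lemma lorentzNorm_indicator_le (n : ℕ) (p : ℝ) (u : ℝ≥0∞) (hp : 0 < p) (hu : 1 ≤ u)
    (E : Set (EuclideanSpace ℝ (Fin n))) (hE : volume E ≠ ⊤) :
    lorentzNorm n p u (E.indicator fun _ => 1) ≤ kUp p u * (volume E) ^ (1/p) := by
  set m := volume E with hm
  set mR := m.toReal with hmR
  have hmR0 : 0 ≤ mR := ENNReal.toReal_nonneg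
  have hmofReal : m = ENNReal.ofReal mR := (ENNReal.ofReal_toReal hE).symm
  unfold lorentzNorm kUp
  split_ifs with hu'
  · -- u = ⊤
    rw [one_mul]
    refine iSup_le fun t => ?_
    rw [rearr_indicator]
    split_ifs with hmt
    · simp
    · rw [mul_one]
      push_neg at hmt
      calc ENNReal.ofReal (t.1 ^ (1/p)) = (ENNReal.ofReal t.1) ^ (1/p) :=
            (ofReal_rpow _ _ t.2.le (by positivity)).symm
        _ ≤ m ^ (1/p) := ENNReal.rpow_le_rpow hmt.le (by positivity)
  · -- u finite
    have hu0 : u ≠ 0 := by intro h; rw [h] at hu; exact (by simp at hu)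
    have hur : 1 ≤ u.toReal := by
      rw [← ENNReal.toReal_one]
      exact ENNReal.toReal_mono hu' hu
    set u' := u.toReal with hu'def
    have hu'0 : 0 < u' := by linarith
    set β := u' / p with hβdef
    have hβ0 : 0 < β := by positivity
    have key : (∫⁻ t in Set.Ioi (0 : ℝ),
        (ENNReal.ofReal (t ^ (1 / p)) * rearr n (E.indicator fun _ => 1) t) ^ u' *
          ENNReal.ofReal (1 / t)) ≤ ENNReal.ofReal (mR ^ β / β) := by
      have hle : ∀ t ∈ Set.Ioi (0:ℝ),
          (ENNReal.ofReal (t ^ (1 / p)) * rearr n (E.indicator fun _ => 1) t) ^ u' *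
            ENNReal.ofReal (1 / t)
          ≤ (Set.Ioo (0:ℝ) mR).indicator (fun t => ENNReal.ofReal (t ^ (β - 1))) t := by
        intro t ht
        rw [rearr_indicator]
        split_ifs with hmt
        · rw [mul_zero, ENNReal.zero_rpow_of_pos hu'0, zero_mul]
          exact zero_le
        · push_neg at hmt
          have htmR : t < mR := by
            have hmt' : ENNReal.ofReal t < ENNReal.ofReal mR :=
              lt_of_lt_of_le hmt (le_of_eq hmofReal)
            exact (ENNReal.ofReal_lt_ofReal_iff_of_nonneg (le_of_lt ht)).1 hmt'
          rw [Set.indicator_of_mem (by exact ⟨ht, htmR⟩), mul_one,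
            ofReal_rpow _ _ (Real.rpow_nonneg ht.le _) hu'0]
          have hr : (t ^ (1/p)) ^ u' * (1/t) = t ^ (β - 1) := by
            rw [← Real.rpow_mul ht.le, Real.rpow_sub ht, Real.rpow_one]
            have he : 1/p * u' = β := by rw [hβdef]; ring
            rw [he, one_div, div_eq_mul_inv]
          rw [← ENNReal.ofReal_mul (Real.rpow_nonneg (Real.rpow_nonneg ht.le _) _), hr]
      calc _ ≤ ∫⁻ t in Set.Ioi (0:ℝ),
              (Set.Ioo (0:ℝ) mR).indicator (fun t => ENNReal.ofReal (t ^ (β - 1))) t := by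
              exact setLIntegral_mono' measurableSet_Ioi hle
        _ = ∫⁻ t in Set.Ioo (0:ℝ) mR, ENNReal.ofReal (t ^ (β - 1)) := by
              rw [lintegral_indicator measurableSet_Ioo, Measure.restrict_restrict measurableSet_Ioo,
                Set.inter_eq_self_of_subset_left (fun x hx => hx.1)]
        _ = ENNReal.ofReal (mR ^ β / β) := lint_Ioo_rpow mR β hmR0 hβ0
    have h1 : β * (1/u') = 1/p := by
      rw [hβdef]; field_simp; try ring
    have hreal : (mR ^ β / β) ^ (1/u') = mR ^ (1/p) * (p/u') ^ (1/u') := by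
      rw [div_eq_mul_inv, Real.mul_rpow (Real.rpow_nonneg hmR0 _) (by positivity),
        ← Real.rpow_mul hmR0, h1]
      congr 2
      rw [hβdef]
      field_simp
    calc _ ≤ (ENNReal.ofReal (mR ^ β / β)) ^ (1/u') := ENNReal.rpow_le_rpow key (by positivity)
      _ = ENNReal.ofReal (mR ^ (1/p)) * ENNReal.ofReal ((p/u') ^ (1/u')) := by
          rw [ofReal_rpow _ _ (by positivity) (by positivity), hreal,
            ENNReal.ofReal_mul (Real.rpow_nonneg hmR0 _)]
      _ = ENNReal.ofReal ((p/u') ^ (1/u')) * m ^ (1/p) := by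
          rw [hmofReal, ofReal_rpow _ _ hmR0 (by positivity)]
          ring

noncomputable def kLow (q : ℝ) (s : ℝ≥0∞) : ℝ≥0∞ :=
  if s = ⊤ then ENNReal.ofReal ((1/2:ℝ) ^ (1 / q))
  else ENNReal.ofReal ((q / s.toReal) ^ (1 / s.toReal))

lemma lorentzNorm_indicator_ge (n : ℕ) (q : ℝ) (s : ℝ≥0∞) (hq : 0 < q) (hs : 1 ≤ s)
    (E : Set (EuclideanSpace ℝ (Fin n))) (hE0 : volume E ≠ 0) (hE : volume E ≠ ⊤)
    (a : ℝ≥0∞) (ha : a ≠ ⊤) (g : EuclideanSpace ℝ (Fin n) → ℝ≥0∞)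
    (hg : ∀ x, E.indicator (fun _ => a) x ≤ g x) :
    kLow q s * a * (volume E) ^ (1/q) ≤ lorentzNorm n q s g := by
  set m := volume E with hm
  set mR := m.toReal with hmRdef
  have hmR0 : 0 < mR := ENNReal.toReal_pos hE0 hE
  have hmofReal : m = ENNReal.ofReal mR := (ENNReal.ofReal_toReal hE).symm
  have hmq : m ^ (1/q) = ENNReal.ofReal (mR ^ (1/q)) := by
    rw [hmofReal, ofReal_rpow _ _ hmR0.le (by positivity)]
  have hra : ∀ t : ℝ, 0 < t → t < mR → a ≤ rearr n g t := by
    intro t ht htm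
    have h1 := rearr_mono hg t
    rw [rearr_indicator] at h1
    have h2 : ENNReal.ofReal t < m := by
      rw [hmofReal]
      exact (ENNReal.ofReal_lt_ofReal_iff hmR0).2 htm
    rw [if_neg (not_le.2 h2)] at h1
    exact h1
  unfold lorentzNorm kLow
  split_ifs with hs'
  · -- s = ⊤
    have ht0 : (0:ℝ) < mR/2 := by linarith
    refine le_trans ?_ (le_iSup _ (⟨mR/2, ht0⟩ : {t : ℝ // 0 < t}))
    have h3 : a ≤ rearr n g (mR/2) := hra _ ht0 (by linarith)
    refine le_trans ?_ (mul_le_mul_right h3 _)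
    have h4 : (mR/2 : ℝ) ^ (1/q) = (1/2:ℝ) ^ (1/q) * mR ^ (1/q) := by
      rw [div_eq_mul_inv, mul_comm, ← Real.mul_rpow (by norm_num) hmR0.le]
      norm_num
    rw [h4, ENNReal.ofReal_mul (by positivity), hmq]
    ring_nf
    exact le_refl _
  · -- s finite
    have hsr : 1 ≤ s.toReal := by
      rw [← ENNReal.toReal_one]
      exact ENNReal.toReal_mono hs' hs
    set s' := s.toReal with hs'def
    have hs'0 : 0 < s' := by linarith
    set β := s' / q with hβdef
    have hβ0 : 0 < β := by positivity
    have has : a ^ s' ≠ ⊤ := ENNReal.rpow_ne_top_of_nonneg hs'0.le ha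
    have key : a ^ s' * ENNReal.ofReal (mR ^ β / β) ≤
        ∫⁻ t in Set.Ioi (0 : ℝ),
          (ENNReal.ofReal (t ^ (1 / q)) * rearr n g t) ^ s' * ENNReal.ofReal (1 / t) := by
      have h5 : ∀ t ∈ Set.Ioi (0:ℝ),
          (Set.Ioo (0:ℝ) mR).indicator (fun t => a ^ s' * ENNReal.ofReal (t ^ (β - 1))) t ≤
          (ENNReal.ofReal (t ^ (1 / q)) * rearr n g t) ^ s' * ENNReal.ofReal (1 / t) := by
        intro t ht
        by_cases htm : t ∈ Set.Ioo (0:ℝ) mR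
        · rw [Set.indicator_of_mem htm]
          have h6 : a ^ s' * ENNReal.ofReal (t ^ (β - 1)) =
              (ENNReal.ofReal (t ^ (1 / q)) * a) ^ s' * ENNReal.ofReal (1 / t) := by
            rw [ENNReal.mul_rpow_of_nonneg _ _ hs'0.le,
              ofReal_rpow _ _ (Real.rpow_nonneg ht.le _) hs'0]
            have hr : (t ^ (1/q)) ^ s' * (1/t) = t ^ (β - 1) := by
              rw [← Real.rpow_mul ht.le, Real.rpow_sub ht, Real.rpow_one]
              have he : 1/q * s' = β := by rw [hβdef]; ring
              rw [he, one_div, div_eq_mul_inv]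
            rw [mul_comm (ENNReal.ofReal ((t ^ (1/q)) ^ s')) (a ^ s'), mul_assoc,
              ← ENNReal.ofReal_mul (Real.rpow_nonneg (Real.rpow_nonneg ht.le _) _), hr]
          rw [h6]
          exact mul_le_mul_left
            (ENNReal.rpow_le_rpow (mul_le_mul_right (hra t htm.1 htm.2) _) hs'0.le) _
        · rw [Set.indicator_of_notMem htm]
          exact zero_le
      calc a ^ s' * ENNReal.ofReal (mR ^ β / β)
          = a ^ s' * ∫⁻ t in Set.Ioo (0:ℝ) mR, ENNReal.ofReal (t ^ (β - 1)) := by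
            rw [lint_Ioo_rpow mR β hmR0.le hβ0]
        _ = ∫⁻ t in Set.Ioo (0:ℝ) mR, a ^ s' * ENNReal.ofReal (t ^ (β - 1)) := by
            rw [lintegral_const_mul' _ _ has]
        _ = ∫⁻ t in Set.Ioi (0:ℝ),
              (Set.Ioo (0:ℝ) mR).indicator (fun t => a ^ s' * ENNReal.ofReal (t ^ (β - 1))) t := by
            rw [lintegral_indicator measurableSet_Ioo, Measure.restrict_restrict measurableSet_Ioo,
              Set.inter_eq_self_of_subset_left (fun x hx => hx.1)]
        _ ≤ _ := setLIntegral_mono' measurableSet_Ioi h5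
    have h7 : (a ^ s' * ENNReal.ofReal (mR ^ β / β)) ^ (1/s') =
        ENNReal.ofReal ((q/s') ^ (1/s')) * a * m ^ (1/q) := by
      rw [ENNReal.mul_rpow_of_nonneg _ _ (by positivity), ← ENNReal.rpow_mul,
        mul_one_div_cancel hs'0.ne', ENNReal.rpow_one]
      have hreal : (mR ^ β / β) ^ (1/s') = mR ^ (1/q) * (q/s') ^ (1/s') := by
        rw [div_eq_mul_inv, Real.mul_rpow (Real.rpow_nonneg hmR0.le _) (by positivity),
          ← Real.rpow_mul hmR0.le]
        have h1 : β * (1/s') = 1/q := by rw [hβdef]; field_simp; try ring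
        rw [h1]
        congr 2
        rw [hβdef]
        field_simp
      rw [ofReal_rpow _ _ (by positivity) (by positivity), hreal,
        ENNReal.ofReal_mul (Real.rpow_nonneg hmR0.le _), hmq]
      ring
    calc ENNReal.ofReal ((q/s') ^ (1/s')) * a * m ^ (1/q)
        = (a ^ s' * ENNReal.ofReal (mR ^ β / β)) ^ (1/s') := h7.symm
      _ ≤ _ := ENNReal.rpow_le_rpow key (by positivity)

lemma indicator_ofReal (n : ℕ) (E : Set (EuclideanSpace ℝ (Fin n))) :
    (fun x => ENNReal.ofReal |E.indicator (fun _ => (1:ℝ)) x|) =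
      E.indicator (fun _ => (1:ℝ≥0∞)) := by
  funext x
  by_cases hx : x ∈ E
  · simp [Set.indicator_of_mem hx]
  · simp [Set.indicator_of_notMem hx]

lemma volume_ball_euclidean (n : ℕ) (hn : 0 < n) (x : EuclideanSpace ℝ (Fin n)) {r : ℝ}
    (hr : 0 ≤ r) :
    volume (ball x r) = ENNReal.ofReal (r ^ (n:ℝ)) *
      volume (ball (0 : EuclideanSpace ℝ (Fin n)) 1) := by
  have : Nontrivial (EuclideanSpace ℝ (Fin n)) := by
    apply Module.nontrivial_of_finrank_pos (R := ℝ)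
    rw [finrank_euclideanSpace_fin]
    exact hn
  rw [Measure.addHaar_ball _ _ hr, finrank_euclideanSpace_fin, ← Real.rpow_natCast r n]

lemma fracMax_indicator_lower (n : ℕ) (hn : 0 < n) (α : ℝ) (hα0 : 0 ≤ α) (hαn : α < n) :
    ∃ c₁ : ℝ≥0∞, 0 < c₁ ∧ c₁ ≠ ⊤ ∧ ∀ δ : ℝ, 0 < δ →
      ∀ x ∈ ball (0 : EuclideanSpace ℝ (Fin n)) δ,
        c₁ * ENNReal.ofReal (δ ^ α) ≤
          fracMax n α ((ball (0 : EuclideanSpace ℝ (Fin n)) δ).indicator fun _ => (1:ℝ)) x := by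
  set v := volume (ball (0 : EuclideanSpace ℝ (Fin n)) 1) with hv
  have hv0 : v ≠ 0 := (measure_ball_pos volume _ one_pos).ne'
  have hvT : v ≠ ⊤ := measure_ball_lt_top.ne
  set e : ℝ := α / n - 1 with he
  refine ⟨ENNReal.ofReal (2 ^ (α - n)) * v ^ e * v, ?_, ?_, ?_⟩
  · apply ENNReal.mul_pos
    apply mul_ne_zero
    · simp [Real.rpow_pos_of_pos, (by positivity : (0:ℝ) < 2 ^ (α - (n:ℝ)))]
    · exact (ENNReal.rpow_pos (lt_of_le_of_ne ((zero_le : 0 ≤ v)) (Ne.symm hv0)) hvT).ne'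
    · exact hv0
  · refine ENNReal.mul_ne_top (ENNReal.mul_ne_top ENNReal.ofReal_ne_top ?_) hvT
    intro h
    rcases ENNReal.rpow_eq_top_iff.1 h with ⟨h1, _⟩ | ⟨h1, _⟩
    · exact hv0 h1
    · exact hvT h1
  · intro δ hδ x hx
    set f := (ball (0 : EuclideanSpace ℝ (Fin n)) δ).indicator fun _ => (1:ℝ) with hf
    have h2δ : (0:ℝ) < 2 * δ := by linarith
    refine le_trans ?_ (le_iSup _ (⟨2 * δ, h2δ⟩ : {r : ℝ // 0 < r}))
    have hint : ∫⁻ y in ball x (2 * δ), ENNReal.ofReal |f y| =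
        volume (ball (0 : EuclideanSpace ℝ (Fin n)) δ) := by
      rw [hf, indicator_ofReal, lintegral_indicator measurableSet_ball,
        Measure.restrict_restrict measurableSet_ball, setLIntegral_one,
        Set.inter_eq_self_of_subset_left]
      intro y hy
      have : dist y x ≤ dist y 0 + dist 0 x := dist_triangle y 0 x
      have h1 : dist y 0 < δ := mem_ball.1 hy
      have h2 : dist 0 x < δ := by rw [dist_comm]; exact mem_ball.1 hx
      exact mem_ball.2 (by rw [mem_ball] at *; linarith)
    rw [hint, volume_ball_euclidean n hn _ h2δ.le, volume_ball_euclidean n hn _ hδ.le, ← hv]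
    have hsplit : (ENNReal.ofReal ((2*δ) ^ (n:ℝ)) * v) ^ e =
        ENNReal.ofReal (2 ^ (α - n)) * ENNReal.ofReal (δ ^ (α - n)) * v ^ e := by
      rw [ENNReal.mul_rpow_of_ne_top ENNReal.ofReal_ne_top hvT]
      congr 1
      rw [ENNReal.ofReal_rpow_of_pos (Real.rpow_pos_of_pos h2δ _),
        ← Real.rpow_mul h2δ.le]
      have hne : (n:ℝ) * e = α - n := by
        rw [he]; field_simp
      rw [hne, Real.mul_rpow (by norm_num) hδ.le, ENNReal.ofReal_mul (by positivity)]
    rw [hsplit]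
    have hfin : ENNReal.ofReal (δ ^ (α - n)) * ENNReal.ofReal (δ ^ (n:ℝ)) =
        ENNReal.ofReal (δ ^ α) := by
      rw [← ENNReal.ofReal_mul (by positivity), ← Real.rpow_add hδ]
      norm_num
    have hrg : ENNReal.ofReal (2 ^ (α - n)) * v ^ e * v * ENNReal.ofReal (δ ^ α)
        = ENNReal.ofReal (2 ^ (α - ↑n)) * ENNReal.ofReal (δ ^ (α - ↑n)) * v ^ e *
            (ENNReal.ofReal (δ ^ (n:ℝ)) * v) := by rw [← hfin]; ring
    rw [hrg]

lemma ofReal_rpow_add (δ a b : ℝ) (hδ : 0 < δ) :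
    ENNReal.ofReal (δ ^ a) * ENNReal.ofReal (δ ^ b) = ENNReal.ofReal (δ ^ (a + b)) := by
  rw [← ENNReal.ofReal_mul (Real.rpow_nonneg hδ.le _), ← Real.rpow_add hδ]

lemma morrey_upper (n : ℕ) (hn : 0 < n) (p lam : ℝ) (u : ℝ≥0∞) (hp : 0 < p) (hu : 1 ≤ u)
    (hl0 : 0 < lam) (hln : lam < n) (δ : ℝ) (hδ : 0 < δ) :
    lorentzMorrey n p u lam ((ball (0:EuclideanSpace ℝ (Fin n)) δ).indicator fun _ => (1:ℝ≥0∞)) ≤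
      kUp p u * (volume (ball (0:EuclideanSpace ℝ (Fin n)) 1)) ^ (1/p) *
        ENNReal.ofReal (δ ^ ((n - lam)/p)) := by
  set v := volume (ball (0:EuclideanSpace ℝ (Fin n)) 1) with hv
  have hvT : v ≠ ⊤ := measure_ball_lt_top.ne
  unfold lorentzMorrey
  refine iSup_le fun x => iSup_le fun r => ?_
  rw [Set.indicator_indicator]
  set E := ball x r.1 ∩ ball (0:EuclideanSpace ℝ (Fin n)) δ with hE
  have hET : volume E ≠ ⊤ :=
    (lt_of_le_of_lt (measure_mono Set.inter_subset_left) measure_ball_lt_top).ne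
  calc ENNReal.ofReal (r.1 ^ (-(lam / p))) * lorentzNorm n p u (E.indicator fun _ => 1)
      ≤ ENNReal.ofReal (r.1 ^ (-(lam / p))) * (kUp p u * (volume E) ^ (1/p)) :=
        mul_le_mul_right (lorentzNorm_indicator_le n p u hp hu E hET) _
    _ = kUp p u * (ENNReal.ofReal (r.1 ^ (-(lam / p))) * (volume E) ^ (1/p)) := by ring
    _ ≤ kUp p u * (v ^ (1/p) * ENNReal.ofReal (δ ^ ((n - lam)/p))) := ?_
    _ = kUp p u * v ^ (1/p) * ENNReal.ofReal (δ ^ ((n - lam)/p)) := by ring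
  refine mul_le_mul_right ?_ _
  rcases le_total r.1 δ with hrδ | hrδ
  · -- r ≤ δ
    have h1 : volume E ≤ ENNReal.ofReal (r.1 ^ (n:ℝ)) * v := by
      rw [← volume_ball_euclidean n hn x r.2.le]
      exact measure_mono Set.inter_subset_left
    calc ENNReal.ofReal (r.1 ^ (-(lam / p))) * (volume E) ^ (1/p)
        ≤ ENNReal.ofReal (r.1 ^ (-(lam / p))) * (ENNReal.ofReal (r.1 ^ (n:ℝ)) * v) ^ (1/p) :=
          mul_le_mul_right (ENNReal.rpow_le_rpow h1 (by positivity)) _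
      _ = ENNReal.ofReal (r.1 ^ ((n - lam)/p)) * v ^ (1/p) := by
          rw [ENNReal.mul_rpow_of_ne_top ENNReal.ofReal_ne_top hvT,
            ofReal_rpow _ _ (Real.rpow_nonneg r.2.le _) (by positivity),
            ← Real.rpow_mul r.2.le, ← mul_assoc, ofReal_rpow_add _ _ _ r.2]
          congr 2
          ring
      _ ≤ v ^ (1/p) * ENNReal.ofReal (δ ^ ((n - lam)/p)) := by
          rw [mul_comm]
          refine mul_le_mul_right (ENNReal.ofReal_le_ofReal ?_) _
          exact Real.rpow_le_rpow r.2.le hrδ (div_nonneg (by linarith) hp.le)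
  · -- δ ≤ r
    have h1 : volume E ≤ ENNReal.ofReal (δ ^ (n:ℝ)) * v := by
      rw [← volume_ball_euclidean n hn 0 hδ.le]
      exact measure_mono Set.inter_subset_right
    have h2 : ENNReal.ofReal (r.1 ^ (-(lam / p))) ≤ ENNReal.ofReal (δ ^ (-(lam / p))) := by
      refine ENNReal.ofReal_le_ofReal ?_
      refine Real.rpow_le_rpow_of_nonpos hδ hrδ ?_
      rw [neg_nonpos]
      positivity
    calc ENNReal.ofReal (r.1 ^ (-(lam / p))) * (volume E) ^ (1/p)
        ≤ ENNReal.ofReal (δ ^ (-(lam / p))) * (ENNReal.ofReal (δ ^ (n:ℝ)) * v) ^ (1/p) :=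
          mul_le_mul' h2 (ENNReal.rpow_le_rpow h1 (by positivity))
      _ = v ^ (1/p) * ENNReal.ofReal (δ ^ ((n - lam)/p)) := by
          rw [ENNReal.mul_rpow_of_ne_top ENNReal.ofReal_ne_top hvT,
            ofReal_rpow _ _ (Real.rpow_nonneg hδ.le _) (by positivity),
            ← Real.rpow_mul hδ.le, ← mul_assoc, ofReal_rpow_add _ _ _ hδ]
          rw [mul_comm]
          congr 2
          ring

lemma morrey_lower (n : ℕ) (hn : 0 < n) (q lam α : ℝ) (s : ℝ≥0∞) (hq : 0 < q) (hs : 1 ≤ s)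
    (c₁ : ℝ≥0∞) (hc₁T : c₁ ≠ ⊤)
    (δ : ℝ) (hδ : 0 < δ) (g : EuclideanSpace ℝ (Fin n) → ℝ≥0∞)
    (hg : ∀ x ∈ ball (0:EuclideanSpace ℝ (Fin n)) δ, c₁ * ENNReal.ofReal (δ ^ α) ≤ g x) :
    kLow q s * (c₁ * ENNReal.ofReal (δ ^ α)) *
        (volume (ball (0:EuclideanSpace ℝ (Fin n)) 1)) ^ (1/q) *
        ENNReal.ofReal (δ ^ ((n:ℝ)/q + -(lam/q))) ≤
      lorentzMorrey n q s lam g := by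
  set v := volume (ball (0:EuclideanSpace ℝ (Fin n)) 1) with hv
  have hvT : v ≠ ⊤ := measure_ball_lt_top.ne
  unfold lorentzMorrey
  refine le_trans ?_ (le_iSup_of_le (0:EuclideanSpace ℝ (Fin n))
    (le_iSup_of_le (⟨δ, hδ⟩ : {r : ℝ // 0 < r}) (le_refl _)))
  have hB0 : volume (ball (0:EuclideanSpace ℝ (Fin n)) δ) ≠ 0 :=
    (measure_ball_pos volume _ hδ).ne'
  have hBT : volume (ball (0:EuclideanSpace ℝ (Fin n)) δ) ≠ ⊤ := measure_ball_lt_top.ne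
  have haT : c₁ * ENNReal.ofReal (δ ^ α) ≠ ⊤ :=
    ENNReal.mul_ne_top hc₁T ENNReal.ofReal_ne_top
  have hkey := lorentzNorm_indicator_ge n q s hq hs (ball (0:EuclideanSpace ℝ (Fin n)) δ)
    hB0 hBT (c₁ * ENNReal.ofReal (δ ^ α)) haT
    ((ball (0:EuclideanSpace ℝ (Fin n)) δ).indicator g) ?_
  · refine le_trans (le_of_eq ?_) (mul_le_mul_right hkey _)
    rw [volume_ball_euclidean n hn 0 hδ.le, ← hv,
      ENNReal.mul_rpow_of_ne_top ENNReal.ofReal_ne_top hvT,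
      ofReal_rpow _ _ (Real.rpow_nonneg hδ.le _) (by positivity),
      ← Real.rpow_mul hδ.le, ← ofReal_rpow_add δ ((n:ℝ)/q) (-(lam/q)) hδ]
    have hnq : (n:ℝ) * (1/q) = (n:ℝ)/q := by ring
    rw [hnq]
    ring
  · intro y
    by_cases hy : y ∈ ball (0:EuclideanSpace ℝ (Fin n)) δ
    · rw [Set.indicator_of_mem hy, Set.indicator_of_mem hy]
      exact hg y hy
    · rw [Set.indicator_of_notMem hy, Set.indicator_of_notMem hy]

lemma exp_eq_of_bound (k₁ k₂ a b : ℝ) (hk₁ : 0 < k₁)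
    (h : ∀ δ : ℝ, 0 < δ → k₁ * δ ^ a ≤ k₂ * δ ^ b) : a = b := by
  have h1 := h 1 one_pos
  rw [Real.one_rpow, Real.one_rpow, mul_one, mul_one] at h1
  have hk₂ : 0 < k₂ := lt_of_lt_of_le hk₁ h1
  by_contra hab
  have hd : a - b ≠ 0 := sub_ne_zero.2 hab
  have key : ∀ t : ℝ, Real.exp (t * (a - b)) ≤ k₂ / k₁ := by
    intro t
    have hδ := Real.exp_pos t
    have h2 := h (Real.exp t) hδ
    rw [Real.rpow_def_of_pos hδ, Real.rpow_def_of_pos hδ, Real.log_exp] at h2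
    rw [le_div_iff₀ hk₁]
    refine (mul_le_mul_iff_of_pos_right (Real.exp_pos (t*b))).1 ?_
    have e1 : Real.exp (t*(a-b)) * Real.exp (t*b) = Real.exp (t*a) := by
      rw [← Real.exp_add]
      congr 1
      ring
    calc Real.exp (t*(a-b)) * k₁ * Real.exp (t*b)
        = k₁ * (Real.exp (t*(a-b)) * Real.exp (t*b)) := by ring
      _ = k₁ * Real.exp (t*a) := by rw [e1]
      _ ≤ k₂ * Real.exp (t*b) := h2
  set c := k₂ / k₁ with hc
  have hc0 : 0 < c := div_pos hk₂ hk₁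
  have h3 := key ((Real.log c + 1) / (a - b))
  rw [div_mul_cancel₀ _ hd, Real.exp_add, Real.exp_log hc0] at h3
  nlinarith [Real.exp_one_gt_d9]

/-- necessity: for `0 ≤ α < n`, `1 < p ≤ q < ∞`, `1 ≤ u ≤ s ≤ ∞`,
`0 < λ < n`, `p < (n-λ)/α` (stated as `p·α < n-λ`), if `M_α` is bounded from
`𝓛_{p,u;λ}(ℝⁿ)` to `𝓛_{q,s;λ}(ℝⁿ)`, then `1/p - 1/q = α/(n-λ)`. -/
theorem stmt_9 (n : ℕ) (α p q lam : ℝ) (u s : ℝ≥0∞)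
    (hα0 : 0 ≤ α) (hαn : α < n) (hp : 1 < p) (hpq : p ≤ q)
    (hu : 1 ≤ u) (hus : u ≤ s) (hl0 : 0 < lam) (hln : lam < n)
    (hpα : p * α < n - lam)
    (hbdd : ∃ C : ℝ, 0 < C ∧ ∀ f : EuclideanSpace ℝ (Fin n) → ℝ,
      lorentzMorrey n p u lam (fun x => ENNReal.ofReal |f x|) < ⊤ →
      lorentzMorrey n q s lam (fracMax n α f) ≤
        ENNReal.ofReal C * lorentzMorrey n p u lam (fun x => ENNReal.ofReal |f x|)) :
    1 / p - 1 / q = α / (n - lam) := by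
  obtain ⟨C, hC, hb⟩ := hbdd
  have hn : 0 < n := by exact_mod_cast hl0.trans hln
  have hp0 : (0:ℝ) < p := lt_trans one_pos hp
  have hq0 : (0:ℝ) < q := lt_of_lt_of_le hp0 hpq
  have hs1 : 1 ≤ s := le_trans hu hus
  obtain ⟨c₁, hc₁0, hc₁T, hc₁⟩ := fracMax_indicator_lower n hn α hα0 hαn
  set v := volume (ball (0:EuclideanSpace ℝ (Fin n)) 1) with hv
  have hv0 : v ≠ 0 := (measure_ball_pos volume _ one_pos).ne'
  have hvT : v ≠ ⊤ := measure_ball_lt_top.ne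
  -- constants
  have hkUpT : kUp p u ≠ ⊤ := by
    unfold kUp; split_ifs <;> simp
  have hkLow0 : kLow q s ≠ 0 := by
    unfold kLow
    split_ifs with hsT
    · simp only [ne_eq, ENNReal.ofReal_eq_zero, not_le]
      positivity
    · have hsr : 1 ≤ s.toReal := by
        rw [← ENNReal.toReal_one]; exact ENNReal.toReal_mono hsT hs1
      simp only [ne_eq, ENNReal.ofReal_eq_zero, not_le]
      have h1 : (0:ℝ) < q / s.toReal := by positivity
      positivity
  have hkLowT : kLow q s ≠ ⊤ := by
    unfold kLow; split_ifs <;> simp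
  set K₁ : ℝ≥0∞ := kLow q s * c₁ * v ^ (1/q) with hK₁
  set K₂ : ℝ≥0∞ := ENNReal.ofReal C * (kUp p u * v ^ (1/p)) with hK₂
  have hK₁0 : K₁ ≠ 0 := by
    rw [hK₁]
    refine mul_ne_zero (mul_ne_zero hkLow0 hc₁0.ne') ?_
    exact (ENNReal.rpow_pos (lt_of_le_of_ne ((zero_le : 0 ≤ v)) (Ne.symm hv0)) hvT).ne'
  have hK₁T : K₁ ≠ ⊤ := by
    rw [hK₁]
    exact ENNReal.mul_ne_top (ENNReal.mul_ne_top hkLowT hc₁T)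
      (ENNReal.rpow_ne_top_of_nonneg (by positivity) hvT)
  have hK₂T : K₂ ≠ ⊤ := by
    rw [hK₂]
    exact ENNReal.mul_ne_top ENNReal.ofReal_ne_top
      (ENNReal.mul_ne_top hkUpT (ENNReal.rpow_ne_top_of_nonneg (by positivity) hvT))
  set a : ℝ := α + ((n:ℝ)/q + -(lam/q)) with ha
  set b : ℝ := ((n:ℝ) - lam)/p with hb'
  -- main estimate for each δ
  have main : ∀ δ : ℝ, 0 < δ → K₁ * ENNReal.ofReal (δ ^ a) ≤ K₂ * ENNReal.ofReal (δ ^ b) := by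
    intro δ hδ
    set f : EuclideanSpace ℝ (Fin n) → ℝ :=
      (ball (0:EuclideanSpace ℝ (Fin n)) δ).indicator fun _ => (1:ℝ) with hf
    have hrw : (fun x => ENNReal.ofReal |f x|) =
        (ball (0:EuclideanSpace ℝ (Fin n)) δ).indicator (fun _ => (1:ℝ≥0∞)) :=
      indicator_ofReal n _
    have hup : lorentzMorrey n p u lam (fun x => ENNReal.ofReal |f x|) ≤
        kUp p u * v ^ (1/p) * ENNReal.ofReal (δ ^ b) := by
      rw [hrw]
      exact morrey_upper n hn p lam u hp0 hu hl0 hln δ hδ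
    have hfin : lorentzMorrey n p u lam (fun x => ENNReal.ofReal |f x|) < ⊤ :=
      lt_of_le_of_lt hup (by
        refine ENNReal.mul_lt_top ?_ ENNReal.ofReal_lt_top
        exact lt_top_iff_ne_top.2 (ENNReal.mul_ne_top hkUpT
          (ENNReal.rpow_ne_top_of_nonneg (by positivity) hvT)))
    have happ := hb f hfin
    have hlow : K₁ * ENNReal.ofReal (δ ^ a) ≤ lorentzMorrey n q s lam (fracMax n α f) := by
      refine le_trans (le_of_eq ?_) (morrey_lower n hn q lam α s hq0 hs1 c₁ hc₁T δ hδ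
        (fracMax n α f) (hc₁ δ hδ))
      rw [hK₁, ha, ← ofReal_rpow_add δ α _ hδ]
      ring
    calc K₁ * ENNReal.ofReal (δ ^ a) ≤ lorentzMorrey n q s lam (fracMax n α f) := hlow
      _ ≤ ENNReal.ofReal C * lorentzMorrey n p u lam (fun x => ENNReal.ofReal |f x|) := happ
      _ ≤ ENNReal.ofReal C * (kUp p u * v ^ (1/p) * ENNReal.ofReal (δ ^ b)) :=
          mul_le_mul_right hup _
      _ = K₂ * ENNReal.ofReal (δ ^ b) := by rw [hK₂]; ring
  -- pass to reals
  have hreal : ∀ δ : ℝ, 0 < δ → K₁.toReal * δ ^ a ≤ K₂.toReal * δ ^ b := by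
    intro δ hδ
    have h1 := ENNReal.toReal_mono
      (ENNReal.mul_ne_top hK₂T ENNReal.ofReal_ne_top) (main δ hδ)
    simp only [ENNReal.toReal_mul] at h1
    rwa [ENNReal.toReal_ofReal (Real.rpow_nonneg hδ.le a),
      ENNReal.toReal_ofReal (Real.rpow_nonneg hδ.le b)] at h1
  have hK₁pos : 0 < K₁.toReal := ENNReal.toReal_pos hK₁0 hK₁T
  have heq : a = b := exp_eq_of_bound _ _ a b hK₁pos hreal
  rw [ha, hb'] at heq
  have hnl : (0:ℝ) < (n:ℝ) - lam := by linarith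
  rw [eq_div_iff hnl.ne']
  linear_combination -heq
end

section
/- Let 1 ≤ p < ∞, 0 < q < ∞ and λ > n. If f is a measurable function on ℝⁿ with ‖f‖_{𝓛_{p,q;λ}(ℝⁿ)} < ∞, then f = 0 almost everywhere on ℝⁿ. -/
open MeasureTheory ENNReal Set Metric

/-- If `g ≥ c` on a set `S` and `ofReal t < volume S`, then `g*(t) ≥ c`. -/
lemma rearr_lb {n : ℕ} {g : EuclideanSpace ℝ (Fin n) → ℝ≥0∞} {c : ℝ≥0∞}
    {S : Set (EuclideanSpace ℝ (Fin n))}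
    (hS : ∀ x ∈ S, c ≤ g x) {t : ℝ} (ht : ENNReal.ofReal t < volume S) :
    c ≤ rearr n g t := by
  refine le_sInf fun l hl => ?_
  by_contra hlt
  push_neg at hlt
  have hsub : S ⊆ {x | l < g x} := fun x hx => lt_of_lt_of_le hlt (hS x hx)
  exact absurd (le_trans (measure_mono hsub) hl) (not_le.2 ht)

/-- If `g* ≥ c` on `(m/4, m/2]`, then the Lorentz norm is at least
`(m/4)^(1/p) · c · (1/4)^(1/q)`. -/
lemma lorentz_lb {n : ℕ} {p q : ℝ} (hp : 1 ≤ p) (hq : 0 < q)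
    {g : EuclideanSpace ℝ (Fin n) → ℝ≥0∞} {c : ℝ≥0∞} {m : ℝ} (hm : 0 < m)
    (hc : ∀ t ∈ Set.Ioc (m/4) (m/2), c ≤ rearr n g t) :
    (ENNReal.ofReal ((m/4) ^ (1/p)) * c) * ENNReal.ofReal (1/4) ^ (1/q) ≤
      lorentzNorm n p (ENNReal.ofReal q) g := by
  set B := ENNReal.ofReal ((m/4) ^ (1/p)) * c with hB
  rw [lorentzNorm, if_neg ENNReal.ofReal_ne_top, ENNReal.toReal_ofReal hq.le]
  have key : B ^ q * ENNReal.ofReal (1/4) ≤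
      ∫⁻ t in Set.Ioi (0 : ℝ),
        (ENNReal.ofReal (t ^ (1 / p)) * rearr n g t) ^ q * ENNReal.ofReal (1 / t) := by
    have hsub : Set.Ioc (m/4) (m/2) ⊆ Set.Ioi (0:ℝ) := fun t ht =>
      lt_trans (by positivity) ht.1
    refine le_trans ?_ (lintegral_mono_set hsub)
    have hptw : ∀ t ∈ Set.Ioc (m/4) (m/2),
        B ^ q * ENNReal.ofReal (1/m) ≤
          (ENNReal.ofReal (t ^ (1 / p)) * rearr n g t) ^ q * ENNReal.ofReal (1 / t) := by
      intro t ht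
      have ht0 : (0:ℝ) < t := lt_trans (by positivity) ht.1
      have h1 : ENNReal.ofReal ((m/4) ^ (1/p)) ≤ ENNReal.ofReal (t ^ (1/p)) :=
        ENNReal.ofReal_le_ofReal (Real.rpow_le_rpow (by positivity) ht.1.le (by positivity))
      have h2 : B ≤ ENNReal.ofReal (t ^ (1 / p)) * rearr n g t :=
        mul_le_mul' h1 (hc t ht)
      have h3 : ENNReal.ofReal (1/m) ≤ ENNReal.ofReal (1/t) :=
        ENNReal.ofReal_le_ofReal (by
          apply one_div_le_one_div_of_le ht0
          exact le_trans ht.2 (by linarith))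
      exact mul_le_mul' (ENNReal.rpow_le_rpow h2 hq.le) h3
    calc B ^ q * ENNReal.ofReal (1/4)
        = (B ^ q * ENNReal.ofReal (1/m)) * ENNReal.ofReal (m/4) := by
          rw [mul_assoc, ← ENNReal.ofReal_mul (by positivity)]
          congr 2
          field_simp
      _ = ∫⁻ _ in Set.Ioc (m/4) (m/2), B ^ q * ENNReal.ofReal (1/m) := by
          rw [setLIntegral_const, Real.volume_Ioc]
          congr 1
          congr 1
          ring
      _ ≤ _ := lintegral_mono_ae (ae_restrict_of_forall_mem measurableSet_Ioc hptw)
  calc B * ENNReal.ofReal (1/4) ^ (1/q)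
      = (B ^ q * ENNReal.ofReal (1/4)) ^ (1/q) := by
        rw [ENNReal.mul_rpow_of_nonneg _ _ (by positivity), ← ENNReal.rpow_mul,
          mul_one_div_cancel hq.ne', ENNReal.rpow_one]
    _ ≤ _ := ENNReal.rpow_le_rpow key (by positivity)

/-- for `1 ≤ p < ∞`, `0 < q < ∞` and `λ > n`, any measurable `f` with
`‖f‖_{𝓛_{p,q;λ}(ℝⁿ)} < ∞` vanishes a.e. -/
theorem stmt_13 (n : ℕ) (p q lam : ℝ) (hp : 1 ≤ p) (hq : 0 < q) (hl : (n : ℝ) < lam)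
    (f : EuclideanSpace ℝ (Fin n) → ℝ) (hf : Measurable f)
    (hfin : lorentzMorrey n p (ENNReal.ofReal q) lam (fun x => ENNReal.ofReal |f x|) < ⊤) :
    f =ᵐ[volume] 0 := by
  have hp0 : (0:ℝ) < p := lt_of_lt_of_le one_pos hp
  set G : EuclideanSpace ℝ (Fin n) → ℝ≥0∞ := fun x => ENNReal.ofReal |f x| with hGdef
  by_contra hcon
  have hne : volume {x | f x ≠ 0} ≠ 0 := by
    intro h0
    exact hcon (ae_iff.2 (by simpa using h0))
  obtain ⟨k, hk⟩ : ∃ k : ℕ, volume {x | 1/((k:ℝ)+1) < |f x|} ≠ 0 := by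
    by_contra hall
    push_neg at hall
    apply hne
    have hsub : {x | f x ≠ 0} ⊆ ⋃ k : ℕ, {x | 1/((k:ℝ)+1) < |f x|} := by
      intro x hx
      have hfx : 0 < |f x| := abs_pos.2 hx
      obtain ⟨j, hj⟩ := exists_nat_one_div_lt hfx
      exact Set.mem_iUnion.2 ⟨j, hj⟩
    exact measure_mono_null hsub (measure_iUnion_null hall)
  set c : ℝ := 1/((k:ℝ)+1) with hcdef
  have hc0 : 0 < c := by positivity
  set S := {x | c < |f x|} with hSdef
  have hSmeas : MeasurableSet S := measurableSet_lt measurable_const hf.abs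
  have hdens := Besicovitch.ae_tendsto_measure_inter_div_of_measurableSet
    (volume : Measure (EuclideanSpace ℝ (Fin n))) hSmeas
  obtain ⟨x₀, hx₀S, hx₀⟩ : ∃ x ∈ S, Filter.Tendsto
      (fun r => volume (S ∩ closedBall x r) / volume (closedBall x r))
      (nhdsWithin 0 (Set.Ioi 0)) (nhds (S.indicator 1 x)) := by
    by_contra h
    push_neg at h
    exact hk (measure_mono_null (fun x hx => h x hx) hdens)
  rw [Set.indicator_of_mem hx₀S, Pi.one_apply] at hx₀
  have h12 : ∀ᶠ r in nhdsWithin 0 (Set.Ioi 0),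
      (1/2 : ℝ≥0∞) < volume (S ∩ closedBall x₀ r) / volume (closedBall x₀ r) :=
    hx₀.eventually (eventually_gt_nhds (by norm_num))
  obtain ⟨r₀, hr₀, hr₀'⟩ := mem_nhdsGT_iff_exists_Ioc_subset.1 h12
  set K : ℝ≥0∞ := volume (ball (0 : EuclideanSpace ℝ (Fin n)) 1) with hKdef
  have hK0 : K ≠ 0 := (measure_ball_pos _ _ one_pos).ne'
  have hKtop : K ≠ ⊤ := measure_ball_lt_top.ne
  have hKr : 0 < K.toReal := ENNReal.toReal_pos hK0 hKtop
  set κ : ℝ := (1/2) * (1/2)^n * K.toReal with hκdef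
  have hκ0 : 0 < κ := by positivity
  set A := lorentzMorrey n p (ENNReal.ofReal q) lam G with hAdef
  set C : ℝ≥0∞ := ENNReal.ofReal ((κ/4) ^ (1/p) * c) * ENNReal.ofReal (1/4) ^ (1/q) with hCdef
  -- main estimate
  have main : ∀ r ∈ Set.Ioc (0:ℝ) r₀, ENNReal.ofReal (r ^ ((n - lam)/p)) * C ≤ A := by
    intro r hr
    have hr0 : (0:ℝ) < r := hr.1
    have hhalf : r/2 ∈ Set.Ioc (0:ℝ) r₀ := ⟨by linarith, by linarith [hr.2]⟩
    have h1 := hr₀' hhalf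
    set b := volume (closedBall x₀ (r/2)) with hbdef
    have hb0 : b ≠ 0 := (measure_closedBall_pos _ _ (by linarith)).ne'
    have hbtop : b ≠ ⊤ := measure_closedBall_lt_top.ne
    have h2 : (1/2 : ℝ≥0∞) * b ≤ volume (S ∩ closedBall x₀ (r/2)) :=
      (ENNReal.le_div_iff_mul_le (Or.inl hb0) (Or.inl hbtop)).1 h1.le
    set m := volume (S ∩ ball x₀ r) with hmdef
    have hmono : volume (S ∩ closedBall x₀ (r/2)) ≤ m :=
      measure_mono (Set.inter_subset_inter_right _ (closedBall_subset_ball (by linarith)))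
    have hmtop : m ≠ ⊤ :=
      (lt_of_le_of_lt (measure_mono Set.inter_subset_right) measure_ball_lt_top).ne
    have hbval : b = ENNReal.ofReal ((r/2) ^ n) * K := by
      rw [hbdef, Measure.addHaar_closedBall _ _ (by linarith : (0:ℝ) ≤ r/2),
        finrank_euclideanSpace_fin]
    have hmlow : ENNReal.ofReal (κ * r ^ n) ≤ m := by
      refine le_trans ?_ (le_trans h2 hmono)
      rw [hbval, hκdef]
      have : (1/2 : ℝ) * (1/2)^n * K.toReal * r ^ n = (1/2) * ((r/2)^n * K.toReal) := by
        rw [div_pow, one_pow]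
        field_simp
        rw [← mul_pow]; congr 1; ring
      rw [this, ENNReal.ofReal_mul (by norm_num), ENNReal.ofReal_mul (by positivity),
        ENNReal.ofReal_toReal hKtop]
      have h14 : ENNReal.ofReal (1/2 : ℝ) ≤ (1/2 : ℝ≥0∞) := by
        rw [ENNReal.ofReal_div_of_pos (by norm_num), ENNReal.ofReal_one,
          ENNReal.ofReal_ofNat]
      calc ENNReal.ofReal (1/2:ℝ) * (ENNReal.ofReal ((r/2)^n) * K)
          ≤ (1/2 : ℝ≥0∞) * (ENNReal.ofReal ((r/2)^n) * K) := mul_le_mul_left h14 _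
        _ = (1/2 : ℝ≥0∞) * (ENNReal.ofReal ((r/2)^n) * K) := rfl
    set m' := m.toReal with hm'def
    have hm'low : κ * r ^ n ≤ m' := by
      rw [hm'def, ← ENNReal.toReal_ofReal (le_of_lt (by positivity : (0:ℝ) < κ * r^n))]
      exact ENNReal.toReal_mono hmtop hmlow
    have hm'0 : 0 < m' := lt_of_lt_of_le (by positivity) hm'low
    -- rearrangement lower bound
    have hre : ∀ t ∈ Set.Ioc (m'/4) (m'/2),
        ENNReal.ofReal c ≤ rearr n ((ball x₀ r).indicator G) t := by
      intro t ht
      refine rearr_lb (S := S ∩ ball x₀ r) ?_ ?_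
      · intro x hx
        rw [Set.indicator_of_mem hx.2]
        exact ENNReal.ofReal_le_ofReal (le_of_lt hx.1)
      · calc ENNReal.ofReal t ≤ ENNReal.ofReal (m'/2) := ENNReal.ofReal_le_ofReal ht.2
          _ < ENNReal.ofReal m' := (ENNReal.ofReal_lt_ofReal_iff hm'0).2 (by linarith)
          _ = m := ENNReal.ofReal_toReal hmtop
    have hlor := lorentz_lb hp hq hm'0 hre
    -- Morrey term
    have hterm : ENNReal.ofReal (r ^ (-(lam/p))) *
        lorentzNorm n p (ENNReal.ofReal q) ((ball x₀ r).indicator G) ≤ A := by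
      rw [hAdef, lorentzMorrey]
      exact le_iSup_of_le x₀ (le_iSup_of_le ⟨r, hr0⟩ le_rfl)
    refine le_trans ?_ (le_trans (mul_le_mul_right hlor _) hterm)
    -- real computation
    rw [hCdef, ← mul_assoc, ← mul_assoc]
    refine mul_le_mul_left ?_ _
    rw [← ENNReal.ofReal_mul (by positivity), ← ENNReal.ofReal_mul (by positivity),
      ← ENNReal.ofReal_mul (by positivity)]
    refine ENNReal.ofReal_le_ofReal ?_
    have hsplit : r ^ ((n - lam)/p) = r ^ (-(lam/p)) * r ^ ((n:ℝ)/p) := by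
      rw [← Real.rpow_add hr0]
      ring_nf
    have hm4 : (κ/4) ^ (1/p) * r ^ ((n:ℝ)/p) ≤ (m'/4) ^ (1/p) := by
      have : (κ/4) ^ (1/p) * r ^ ((n:ℝ)/p) = (κ * r ^ n / 4) ^ (1/p) := by
        rw [show κ * r ^ n / 4 = (κ/4) * r ^ n by ring,
          Real.mul_rpow (by positivity) (by positivity), ← Real.rpow_natCast r n,
          ← Real.rpow_mul hr0.le]
        congr 1
        ring
      rw [this]
      exact Real.rpow_le_rpow (by positivity) (by linarith) (by positivity)
    calc r ^ ((n - lam)/p) * ((κ/4) ^ (1/p) * c)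
        = r ^ (-(lam/p)) * ((κ/4) ^ (1/p) * r ^ ((n:ℝ)/p)) * c := by rw [hsplit]; ring
      _ ≤ r ^ (-(lam/p)) * (m'/4) ^ (1/p) * c := by
          have h0 : (0:ℝ) ≤ r ^ (-(lam/p)) := (Real.rpow_pos_of_pos hr0 _).le
          exact mul_le_mul_of_nonneg_right (mul_le_mul_of_nonneg_left hm4 h0) hc0.le
      _ = r ^ (-(lam/p)) * ((m'/4) ^ (1/p) * c) := by ring
  -- contradiction via r → 0
  have hAtop : A ≠ ⊤ := hfin.ne
  have hC0 : C ≠ 0 := by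
    rw [hCdef]
    apply mul_ne_zero
    · simp only [ne_eq, ENNReal.ofReal_eq_zero, not_le]
      positivity
    · apply (ENNReal.rpow_pos_of_nonneg _ (by positivity)).ne'
      simp only [ENNReal.ofReal_pos]
      norm_num
  have hCtop : C ≠ ⊤ := by
    rw [hCdef]
    exact ENNReal.mul_ne_top ENNReal.ofReal_ne_top
      (ENNReal.rpow_ne_top_of_nonneg (by positivity) ENNReal.ofReal_ne_top)
  set e : ℝ := (lam - n)/p with hedef
  have he : 0 < e := by
    apply div_pos (by linarith) hp0
  set M := (A / C).toReal with hMdef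
  have hACtop : A / C ≠ ⊤ := (ENNReal.div_lt_top hAtop hC0).ne
  have hM0 : 0 ≤ M := ENNReal.toReal_nonneg
  set s : ℝ := (M+1) ^ (-(1/e)) with hsdef
  have hs0 : 0 < s := Real.rpow_pos_of_pos (by linarith) _
  set r : ℝ := min r₀ s with hrdef
  have hrIoc : r ∈ Set.Ioc (0:ℝ) r₀ := ⟨lt_min hr₀ hs0, min_le_left _ _⟩
  have h1 := main r hrIoc
  have h2 : M < r ^ (-e) := by
    have hse : s ^ (-e) = M + 1 := by
      rw [hsdef, ← Real.rpow_mul (by linarith : (0:ℝ) ≤ M + 1),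
        show (-(1/e)) * (-e) = 1 by field_simp, Real.rpow_one]
    calc M < M + 1 := by linarith
      _ = s ^ (-e) := hse.symm
      _ ≤ r ^ (-e) := Real.rpow_le_rpow_of_nonpos hrIoc.1 (min_le_right _ _) (by linarith)
  have h3 : A / C < ENNReal.ofReal (r ^ (-e)) :=
    (ENNReal.lt_ofReal_iff_toReal_lt hACtop).2 h2
  have h4 : A < ENNReal.ofReal (r ^ (-e)) * C := by
    rw [← ENNReal.div_lt_iff (Or.inl hC0) (Or.inl hCtop)]
    exact h3
  have heq : r ^ ((n - lam)/p) = r ^ (-e) := by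
    congr 1
    rw [hedef]
    ring
  rw [heq] at h1
  exact absurd (lt_of_lt_of_le h4 h1) (lt_irrefl _)
end
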